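/- arXiv:1812.11389 — 5 statements merged into one kernel-verified Lean document; each statement's English description precedes it below -/
import Mathlib

section
/- Let L₁, L₂, L₃ : ℝ³ → ℝ be linearly independent linear functionals, let U := {v ∈ ℝ³ : Lᵢ(v) ≠ 0 for i = 1,2,3}, and for ε = (ε₁,ε₂,ε₃) ∈ {−1,+1}³ let C_ε := {v ∈ ℝ³ : εᵢ·Lᵢ(v) > 0 for i = 1,2,3}. Then: (i) each C_ε is a nonempty open convex cone and the eight sets C_ε are exactly the connected components of U; and (ii) if p₁, p₂, p₃ ∈ ℝ³ are nonzero vectors with Lᵢ(pᵢ) = 0 and L_{i+1}(pᵢ) ≠ 0 ≠ L_{i+2}(pᵢ) for each i (indices mod 3), then T(L₁,L₂,L₃,p₁,p₂,p₃) > 0 if and only if there exist ε ∈ {−1,+1}³ and signs η₁, η₂, η₃ ∈ {−1,+1} such that ηᵢ·pᵢ lies in the closure of C_ε for each i = 1,2,3. -/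
/-- The triple ratio `T(L₁, L₂, L₃, p₁, p₂, p₃)` of three linear functionals and
three vectors on `ℝ³`. -/
noncomputable def tripleRatio (L₁ L₂ L₃ : (Fin 3 → ℝ) →ₗ[ℝ] ℝ) (p₁ p₂ p₃ : Fin 3 → ℝ) : ℝ :=
  (L₁ p₂ * L₂ p₃ * L₃ p₁) / (L₁ p₃ * L₃ p₂ * L₂ p₁)

/-- The open cone `C_ε = {v : εᵢ · Lᵢ(v) > 0 for i = 1, 2, 3}`. -/
def signCone3 (L₁ L₂ L₃ : (Fin 3 → ℝ) →ₗ[ℝ] ℝ) (ε : Fin 3 → ℝ) : Set (Fin 3 → ℝ) :=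
  {v | 0 < ε 0 * L₁ v ∧ 0 < ε 1 * L₂ v ∧ 0 < ε 2 * L₃ v}

lemma cone_open (L₁ L₂ L₃ : (Fin 3 → ℝ) →ₗ[ℝ] ℝ) (ε : Fin 3 → ℝ) :
    IsOpen (signCone3 L₁ L₂ L₃ ε) := by
  have h : ∀ (M : (Fin 3 → ℝ) →ₗ[ℝ] ℝ) (c : ℝ), IsOpen {v : Fin 3 → ℝ | 0 < c * M v} :=
    fun M c => isOpen_lt continuous_const (continuous_const.mul M.continuous_of_finiteDimensional)
  exact (h L₁ (ε 0)).inter ((h L₂ (ε 1)).inter (h L₃ (ε 2)))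

lemma cone_convex (L₁ L₂ L₃ : (Fin 3 → ℝ) →ₗ[ℝ] ℝ) (ε : Fin 3 → ℝ) :
    Convex ℝ (signCone3 L₁ L₂ L₃ ε) := by
  have h : ∀ (M : (Fin 3 → ℝ) →ₗ[ℝ] ℝ) (c : ℝ), Convex ℝ {v : Fin 3 → ℝ | 0 < c * M v} := by
    intro M c
    have : IsLinearMap ℝ (fun v : Fin 3 → ℝ => c * M v) := (c • M).isLinear
    exact convex_halfSpace_gt this 0
  exact (h L₁ (ε 0)).inter ((h L₂ (ε 1)).inter (h L₃ (ε 2)))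

lemma surj_aux (L₁ L₂ L₃ : (Fin 3 → ℝ) →ₗ[ℝ] ℝ)
    (hLI : LinearIndependent ℝ ![L₁, L₂, L₃]) (t : Fin 3 → ℝ) :
    ∃ v : Fin 3 → ℝ, L₁ v = t 0 ∧ L₂ v = t 1 ∧ L₃ v = t 2 := by
  set Φ : (Fin 3 → ℝ) →ₗ[ℝ] (Fin 3 → ℝ) := LinearMap.pi (fun i => ![L₁, L₂, L₃] i) with hΦ
  have hspan : Submodule.span ℝ (Set.range ![L₁, L₂, L₃]) = ⊤ :=
    hLI.span_eq_top_of_card_eq_finrank (by simp [Subspace.dual_finrank_eq])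
  have hinj : Function.Injective Φ := by
    rw [← LinearMap.ker_eq_bot, Submodule.eq_bot_iff]
    intro v hv
    have hv' : ∀ i : Fin 3, (![L₁, L₂, L₃] i) v = 0 := by
      intro i
      have := congrFun (LinearMap.mem_ker.mp hv) i
      simpa [hΦ] using this
    rw [← Module.forall_dual_apply_eq_zero_iff ℝ v]
    intro φ
    have hφ : φ ∈ Submodule.span ℝ (Set.range ![L₁, L₂, L₃]) := hspan ▸ Submodule.mem_top
    have hle : Submodule.span ℝ (Set.range ![L₁, L₂, L₃]) ≤
        LinearMap.ker (Module.Dual.eval ℝ (Fin 3 → ℝ) v) := by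
      rw [Submodule.span_le]
      rintro f ⟨i, rfl⟩
      simpa using hv' i
    simpa using hle hφ
  obtain ⟨v, hv⟩ := (LinearMap.injective_iff_surjective).mp hinj t
  refine ⟨v, ?_, ?_, ?_⟩ <;> [have := congrFun hv 0; have := congrFun hv 1; have := congrFun hv 2] <;>
    simpa [hΦ] using this

lemma sign_eq {x y : ℝ} (hx : x = -1 ∨ x = 1) (hy : y = -1 ∨ y = 1) (h : 0 < x * y) : x = y := by
  rcases hx with rfl | rfl <;> rcases hy with rfl | rfl <;> linarith

lemma pm_ne {x : ℝ} (h : x = -1 ∨ x = 1) : x ≠ 0 := by rcases h with rfl | rfl <;> norm_num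

noncomputable def rsgn (x : ℝ) : ℝ := if 0 < x then 1 else -1

lemma rsgn_pm (x : ℝ) : rsgn x = -1 ∨ rsgn x = 1 := by unfold rsgn; split_ifs <;> simp

lemma rsgn_mul_pos {x : ℝ} (hx : x ≠ 0) : 0 < rsgn x * x := by
  unfold rsgn; split_ifs with h
  · linarith
  · have := lt_of_le_of_ne (not_lt.mp h) hx; linarith

lemma rsgn_sq (x : ℝ) : rsgn x * rsgn x = 1 := by unfold rsgn; split_ifs <;> norm_num

lemma pm_sq {x : ℝ} (h : x = -1 ∨ x = 1) : x * x = 1 := by rcases h with rfl | rfl <;> norm_num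

lemma pm_ne' {x : ℝ} (h : x = -1 ∨ x = 1) : x ≠ 0 := by rcases h with rfl | rfl <;> norm_num

lemma pm_mul {x y : ℝ} (hx : x = -1 ∨ x = 1) (hy : y = -1 ∨ y = 1) : x * y = -1 ∨ x * y = 1 := by
  rcases hx with rfl | rfl <;> rcases hy with rfl | rfl <;> norm_num

lemma pos_of_mul_pos_right' {x y : ℝ} (h : 0 < x * y) (hy : 0 < y) : 0 < x := by nlinarith

lemma closure_cone_subset (L₁ L₂ L₃ : (Fin 3 → ℝ) →ₗ[ℝ] ℝ) (ε : Fin 3 → ℝ) :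
    closure (signCone3 L₁ L₂ L₃ ε) ⊆
      {v | 0 ≤ ε 0 * L₁ v ∧ 0 ≤ ε 1 * L₂ v ∧ 0 ≤ ε 2 * L₃ v} := by
  have h : ∀ (M : (Fin 3 → ℝ) →ₗ[ℝ] ℝ) (c : ℝ), IsClosed {v : Fin 3 → ℝ | 0 ≤ c * M v} :=
    fun M c => isClosed_le continuous_const (continuous_const.mul M.continuous_of_finiteDimensional)
  refine closure_minimal ?_ ((h L₁ (ε 0)).inter ((h L₂ (ε 1)).inter (h L₃ (ε 2))))
  rintro v ⟨h1, h2, h3⟩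
  exact ⟨h1.le, h2.le, h3.le⟩

lemma mem_closure_cone (L₁ L₂ L₃ : (Fin 3 → ℝ) →ₗ[ℝ] ℝ) (ε : Fin 3 → ℝ)
    {v₀ w : Fin 3 → ℝ} (hv₀ : v₀ ∈ signCone3 L₁ L₂ L₃ ε)
    (h1 : 0 ≤ ε 0 * L₁ w) (h2 : 0 ≤ ε 1 * L₂ w) (h3 : 0 ≤ ε 2 * L₃ w) :
    w ∈ closure (signCone3 L₁ L₂ L₃ ε) := by
  obtain ⟨g1, g2, g3⟩ := hv₀
  have htend : Filter.Tendsto (fun t : ℝ => w + t • v₀) (nhdsWithin 0 (Set.Ioi 0)) (nhds w) := by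
    have hc : Continuous (fun t : ℝ => w + t • v₀) := by continuity
    have := (hc.tendsto 0).mono_left (nhdsWithin_le_nhds (s := Set.Ioi 0))
    simpa using this
  refine mem_closure_of_tendsto htend ?_
  filter_upwards [self_mem_nhdsWithin] with t ht
  have ht' : (0:ℝ) < t := ht
  refine ⟨?_, ?_, ?_⟩ <;>
  · simp only [map_add, map_smul, smul_eq_mul, mul_add]
    nlinarith

theorem stmt3 (L₁ L₂ L₃ : (Fin 3 → ℝ) →ₗ[ℝ] ℝ)
    (hLI : LinearIndependent ℝ ![L₁, L₂, L₃]) :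
    -- (i) each `C_ε` is a nonempty open convex cone, the cones `C_ε` are exactly the
    -- connected components of `U`, they exhaust `U`, and they are pairwise distinct,
    -- so `U` has exactly eight connected components.
    ((∀ ε : Fin 3 → ℝ, (∀ i, ε i = -1 ∨ ε i = 1) →
        (signCone3 L₁ L₂ L₃ ε).Nonempty ∧
        IsOpen (signCone3 L₁ L₂ L₃ ε) ∧
        Convex ℝ (signCone3 L₁ L₂ L₃ ε) ∧
        (∀ c : ℝ, 0 < c → ∀ v ∈ signCone3 L₁ L₂ L₃ ε, c • v ∈ signCone3 L₁ L₂ L₃ ε) ∧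
        (∀ v ∈ signCone3 L₁ L₂ L₃ ε,
          connectedComponentIn {w : Fin 3 → ℝ | L₁ w ≠ 0 ∧ L₂ w ≠ 0 ∧ L₃ w ≠ 0} v =
            signCone3 L₁ L₂ L₃ ε)) ∧
      ({w : Fin 3 → ℝ | L₁ w ≠ 0 ∧ L₂ w ≠ 0 ∧ L₃ w ≠ 0} =
        ⋃ ε ∈ {ε : Fin 3 → ℝ | ∀ i, ε i = -1 ∨ ε i = 1}, signCone3 L₁ L₂ L₃ ε) ∧
      (∀ ε ε' : Fin 3 → ℝ, (∀ i, ε i = -1 ∨ ε i = 1) → (∀ i, ε' i = -1 ∨ ε' i = 1) →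
        signCone3 L₁ L₂ L₃ ε = signCone3 L₁ L₂ L₃ ε' → ε = ε')) ∧
    -- (ii) positivity of the triple ratio for a triple of flags is equivalent to the
    -- three projective points lying in the closure of a common cone `C_ε`.
    (∀ p₁ p₂ p₃ : Fin 3 → ℝ, p₁ ≠ 0 → p₂ ≠ 0 → p₃ ≠ 0 →
      L₁ p₁ = 0 → L₂ p₂ = 0 → L₃ p₃ = 0 →
      L₂ p₁ ≠ 0 → L₃ p₁ ≠ 0 → L₃ p₂ ≠ 0 → L₁ p₂ ≠ 0 → L₁ p₃ ≠ 0 → L₂ p₃ ≠ 0 →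
      (0 < tripleRatio L₁ L₂ L₃ p₁ p₂ p₃ ↔
        ∃ ε : Fin 3 → ℝ, (∀ i, ε i = -1 ∨ ε i = 1) ∧
          ∃ η₁ η₂ η₃ : ℝ, (η₁ = -1 ∨ η₁ = 1) ∧ (η₂ = -1 ∨ η₂ = 1) ∧ (η₃ = -1 ∨ η₃ = 1) ∧
            η₁ • p₁ ∈ closure (signCone3 L₁ L₂ L₃ ε) ∧
            η₂ • p₂ ∈ closure (signCone3 L₁ L₂ L₃ ε) ∧
            η₃ • p₃ ∈ closure (signCone3 L₁ L₂ L₃ ε))) := by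
  have hpt : ∀ ε : Fin 3 → ℝ, (∀ i, ε i = -1 ∨ ε i = 1) →
      ∃ v, L₁ v = ε 0 ∧ L₂ v = ε 1 ∧ L₃ v = ε 2 ∧ v ∈ signCone3 L₁ L₂ L₃ ε := by
    intro ε hε
    obtain ⟨v, h0, h1, h2⟩ := surj_aux L₁ L₂ L₃ hLI ε
    have sq : ∀ i, (0:ℝ) < ε i * ε i := fun i => by rcases hε i with h | h <;> rw [h] <;> norm_num
    exact ⟨v, h0, h1, h2, by rw [h0]; exact sq 0, by rw [h1]; exact sq 1, by rw [h2]; exact sq 2⟩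
  have hpt' : ∀ ε : Fin 3 → ℝ, (∀ i, ε i = -1 ∨ ε i = 1) → ∃ v, v ∈ signCone3 L₁ L₂ L₃ ε :=
    fun ε hε => (hpt ε hε).imp fun v hv => hv.2.2.2
  constructor
  · -- part (i)
    have coneU : ∀ ε : Fin 3 → ℝ, signCone3 L₁ L₂ L₃ ε ⊆
        {w : Fin 3 → ℝ | L₁ w ≠ 0 ∧ L₂ w ≠ 0 ∧ L₃ w ≠ 0} := by
      rintro ε w ⟨h1, h2, h3⟩
      refine ⟨?_, ?_, ?_⟩ <;> intro hz <;> [rw [hz] at h1; rw [hz] at h2; rw [hz] at h3] <;>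
        simp at h1 h2 h3
    refine ⟨fun ε hε => ?_, ?_, ?_⟩
    · obtain ⟨v₀, -, -, -, hv₀⟩ := hpt ε hε
      refine ⟨⟨v₀, hv₀⟩, cone_open L₁ L₂ L₃ ε, cone_convex L₁ L₂ L₃ ε, ?_, ?_⟩
      · rintro c hc v ⟨h1, h2, h3⟩
        refine ⟨?_, ?_, ?_⟩ <;> simp only [map_smul, smul_eq_mul] <;> nlinarith
      · intro v hv
        have hvU : v ∈ {w : Fin 3 → ℝ | L₁ w ≠ 0 ∧ L₂ w ≠ 0 ∧ L₃ w ≠ 0} := coneU ε hv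
        apply Set.Subset.antisymm
        · set V : Set (Fin 3 → ℝ) :=
            {w | ε 0 * L₁ w < 0} ∪ ({w | ε 1 * L₂ w < 0} ∪ {w | ε 2 * L₃ w < 0}) with hV
          have hVopen : IsOpen V := by
            have h : ∀ (M : (Fin 3 → ℝ) →ₗ[ℝ] ℝ) (c : ℝ), IsOpen {v : Fin 3 → ℝ | c * M v < 0} :=
              fun M c => isOpen_lt (continuous_const.mul M.continuous_of_finiteDimensional)
                continuous_const
            exact ((h L₁ (ε 0)).union ((h L₂ (ε 1)).union (h L₃ (ε 2))))
          have hdisj : Disjoint (signCone3 L₁ L₂ L₃ ε) V := by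
            rw [Set.disjoint_left]
            rintro w ⟨c1, c2, c3⟩ (h | h | h) <;> simp only [Set.mem_setOf_eq] at h <;> linarith
          have hsub : connectedComponentIn {w : Fin 3 → ℝ | L₁ w ≠ 0 ∧ L₂ w ≠ 0 ∧ L₃ w ≠ 0} v ⊆
              signCone3 L₁ L₂ L₃ ε ∪ V := by
            intro w hw
            obtain ⟨hw1, hw2, hw3⟩ := connectedComponentIn_subset _ _ hw
            have n1 : ε 0 * L₁ w ≠ 0 := mul_ne_zero (pm_ne (hε 0)) hw1
            have n2 : ε 1 * L₂ w ≠ 0 := mul_ne_zero (pm_ne (hε 1)) hw2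
            have n3 : ε 2 * L₃ w ≠ 0 := mul_ne_zero (pm_ne (hε 2)) hw3
            rcases n1.lt_or_gt with h1 | h1
            · exact Or.inr (Or.inl h1)
            rcases n2.lt_or_gt with h2 | h2
            · exact Or.inr (Or.inr (Or.inl h2))
            rcases n3.lt_or_gt with h3 | h3
            · exact Or.inr (Or.inr (Or.inr h3))
            exact Or.inl ⟨h1, h2, h3⟩
          exact isPreconnected_connectedComponentIn.subset_left_of_subset_union
            (cone_open L₁ L₂ L₃ ε) hVopen hdisj hsub
            ⟨v, mem_connectedComponentIn hvU, hv⟩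
        · exact (cone_convex L₁ L₂ L₃ ε).isPreconnected.subset_connectedComponentIn hv (coneU ε)
    · ext w
      simp only [Set.mem_setOf_eq, Set.mem_iUnion]
      constructor
      · rintro ⟨h1, h2, h3⟩
        have key : ∀ x : ℝ, x ≠ 0 → 0 < (if 0 < x then (1:ℝ) else -1) * x := by
          intro x hx
          split_ifs with h
          · linarith
          · have := lt_of_le_of_ne (not_lt.mp h) hx
            linarith
        refine ⟨![if 0 < L₁ w then 1 else -1, if 0 < L₂ w then 1 else -1,
          if 0 < L₃ w then 1 else -1], ?_, ?_, ?_, ?_⟩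
        · intro i
          fin_cases i <;> simp only [Matrix.cons_val_zero, Matrix.cons_val_one, Matrix.head_cons,
            Matrix.cons_val_two, Matrix.tail_cons] <;> split_ifs <;> simp
        · simpa using key _ h1
        · simpa using key _ h2
        · simpa using key _ h3
      · rintro ⟨ε, hε, hw⟩
        exact coneU ε hw
    · intro ε ε' hε hε' heq
      obtain ⟨v, h0, h1, h2, hv⟩ := hpt ε hε
      rw [heq] at hv
      obtain ⟨c1, c2, c3⟩ := hv
      rw [h0] at c1; rw [h1] at c2; rw [h2] at c3
      funext i
      fin_cases i
      · exact (sign_eq (hε' 0) (hε 0) c1).symm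
      · exact (sign_eq (hε' 1) (hε 1) c2).symm
      · exact (sign_eq (hε' 2) (hε 2) c3).symm
  · -- part (ii)
    intro p₁ p₂ p₃ hp₁ hp₂ hp₃ hz1 hz2 hz3 ha hb hc hd he hf
    set a := L₂ p₁ with hA
    set b := L₃ p₁ with hB
    set c := L₃ p₂ with hC
    set d := L₁ p₂ with hD
    set e := L₁ p₃ with hE
    set f := L₂ p₃ with hF
    have hTR : tripleRatio L₁ L₂ L₃ p₁ p₂ p₃ = (d * f * b) / (e * c * a) := rfl
    constructor
    · -- forward
      intro hT
      rw [hTR, div_pos_iff] at hT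
      have hP : 0 < a * b * c * d * e * f := by
        rcases hT with ⟨h1, h2⟩ | ⟨h1, h2⟩ <;> nlinarith
      have ha2 := rsgn_sq a; have hb2 := rsgn_sq b; have hc2 := rsgn_sq c
      have hd2 := rsgn_sq d; have he2 := rsgn_sq e
      have hpa := rsgn_mul_pos ha; have hpb := rsgn_mul_pos hb; have hpc := rsgn_mul_pos hc
      have hpd := rsgn_mul_pos hd; have hpe := rsgn_mul_pos he
      set ε : Fin 3 → ℝ := ![rsgn b * rsgn c * rsgn d, rsgn a, rsgn b] with hεdef
      have hε0 : ε 0 = rsgn b * rsgn c * rsgn d := rfl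
      have hε1 : ε 1 = rsgn a := rfl
      have hε2 : ε 2 = rsgn b := rfl
      have hεpm : ∀ i, ε i = -1 ∨ ε i = 1 := by
        intro i
        fin_cases i
        · exact pm_mul (pm_mul (rsgn_pm b) (rsgn_pm c)) (rsgn_pm d)
        · exact rsgn_pm a
        · exact rsgn_pm b
      obtain ⟨v₀, hv₀⟩ := hpt' ε hεpm
      refine ⟨ε, hεpm, 1, rsgn b * rsgn c, rsgn b * rsgn c * rsgn d * rsgn e, Or.inr rfl,
        pm_mul (rsgn_pm b) (rsgn_pm c),
        pm_mul (pm_mul (pm_mul (rsgn_pm b) (rsgn_pm c)) (rsgn_pm d)) (rsgn_pm e), ?_, ?_, ?_⟩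
      · refine mem_closure_cone L₁ L₂ L₃ ε hv₀ ?_ ?_ ?_ <;>
          simp only [map_smul, smul_eq_mul, hε0, hε1, hε2, ← hA, ← hB, hz1]
        · norm_num
        · rw [one_mul]; exact hpa.le
        · rw [one_mul]; exact hpb.le
      · refine mem_closure_cone L₁ L₂ L₃ ε hv₀ ?_ ?_ ?_ <;>
          simp only [map_smul, smul_eq_mul, hε0, hε1, hε2, ← hC, ← hD, hz2]
        · have h : rsgn b * rsgn c * rsgn d * (rsgn b * rsgn c * d) =
              (rsgn b * rsgn b) * ((rsgn c * rsgn c) * (rsgn d * d)) := by ring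
          rw [h, hb2, hc2, one_mul, one_mul]; exact hpd.le
        · norm_num
        · have h : rsgn b * (rsgn b * rsgn c * c) =
              (rsgn b * rsgn b) * (rsgn c * c) := by ring
          rw [h, hb2, one_mul]; exact hpc.le
      · refine mem_closure_cone L₁ L₂ L₃ ε hv₀ ?_ ?_ ?_ <;>
          simp only [map_smul, smul_eq_mul, hε0, hε1, hε2, ← hE, ← hF, hz3]
        · have h : rsgn b * rsgn c * rsgn d * (rsgn b * rsgn c * rsgn d * rsgn e * e) =
              (rsgn b * rsgn b) * ((rsgn c * rsgn c) * ((rsgn d * rsgn d) * (rsgn e * e))) := by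
            ring
          rw [h, hb2, hc2, hd2, one_mul, one_mul, one_mul]; exact hpe.le
        · have hY : 0 < (rsgn a * a) * ((rsgn b * b) * ((rsgn c * c) * ((rsgn d * d) *
              (rsgn e * e)))) :=
            mul_pos hpa (mul_pos hpb (mul_pos hpc (mul_pos hpd hpe)))
          have hXY : (rsgn a * (rsgn b * rsgn c * rsgn d * rsgn e * f)) *
              ((rsgn a * a) * ((rsgn b * b) * ((rsgn c * c) * ((rsgn d * d) * (rsgn e * e))))) =
              a * b * c * d * e * f := by
            have h : (rsgn a * (rsgn b * rsgn c * rsgn d * rsgn e * f)) *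
                ((rsgn a * a) * ((rsgn b * b) * ((rsgn c * c) * ((rsgn d * d) * (rsgn e * e))))) =
                (rsgn a * rsgn a) * ((rsgn b * rsgn b) * ((rsgn c * rsgn c) * ((rsgn d * rsgn d) *
                  ((rsgn e * rsgn e) * (a * b * c * d * e * f))))) := by ring
            rw [h, ha2, hb2, hc2, hd2, he2]; ring
          have hpos := pos_of_mul_pos_right'
            (x := rsgn a * (rsgn b * rsgn c * rsgn d * rsgn e * f)) (by rw [hXY]; exact hP) hY
          exact hpos.le
        · norm_num
    · -- backward
      rintro ⟨ε, hε, η₁, η₂, η₃, hη₁, hη₂, hη₃, m1, m2, m3⟩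
      obtain ⟨q11, q12, q13⟩ := closure_cone_subset L₁ L₂ L₃ ε m1
      obtain ⟨q21, q22, q23⟩ := closure_cone_subset L₁ L₂ L₃ ε m2
      obtain ⟨q31, q32, q33⟩ := closure_cone_subset L₁ L₂ L₃ ε m3
      simp only [map_smul, smul_eq_mul, ← hA, ← hB, ← hC, ← hD, ← hE, ← hF] at q11 q12 q13 q21 q22 q23 q31 q32 q33
      have s1 : 0 < ε 1 * (η₁ * a) :=
        lt_of_le_of_ne q12 (Ne.symm (mul_ne_zero (pm_ne' (hε 1)) (mul_ne_zero (pm_ne' hη₁) ha)))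
      have s2 : 0 < ε 2 * (η₁ * b) :=
        lt_of_le_of_ne q13 (Ne.symm (mul_ne_zero (pm_ne' (hε 2)) (mul_ne_zero (pm_ne' hη₁) hb)))
      have s3 : 0 < ε 2 * (η₂ * c) :=
        lt_of_le_of_ne q23 (Ne.symm (mul_ne_zero (pm_ne' (hε 2)) (mul_ne_zero (pm_ne' hη₂) hc)))
      have s4 : 0 < ε 0 * (η₂ * d) :=
        lt_of_le_of_ne q21 (Ne.symm (mul_ne_zero (pm_ne' (hε 0)) (mul_ne_zero (pm_ne' hη₂) hd)))
      have s5 : 0 < ε 0 * (η₃ * e) :=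
        lt_of_le_of_ne q31 (Ne.symm (mul_ne_zero (pm_ne' (hε 0)) (mul_ne_zero (pm_ne' hη₃) he)))
      have s6 : 0 < ε 1 * (η₃ * f) :=
        lt_of_le_of_ne q32 (Ne.symm (mul_ne_zero (pm_ne' (hε 1)) (mul_ne_zero (pm_ne' hη₃) hf)))
      have key : (ε 1 * (η₁ * a)) * ((ε 2 * (η₁ * b)) * ((ε 2 * (η₂ * c)) *
          ((ε 0 * (η₂ * d)) * ((ε 0 * (η₃ * e)) * (ε 1 * (η₃ * f)))))) =
          (d * f * b) * (e * c * a) := by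
        have h0 := pm_sq (hε 0); have h1 := pm_sq (hε 1); have h2 := pm_sq (hε 2)
        have g1 := pm_sq hη₁; have g2 := pm_sq hη₂; have g3 := pm_sq hη₃
        have : (ε 1 * (η₁ * a)) * ((ε 2 * (η₁ * b)) * ((ε 2 * (η₂ * c)) *
            ((ε 0 * (η₂ * d)) * ((ε 0 * (η₃ * e)) * (ε 1 * (η₃ * f)))))) =
            (ε 0 * ε 0) * ((ε 1 * ε 1) * ((ε 2 * ε 2) * ((η₁ * η₁) * ((η₂ * η₂) * ((η₃ * η₃) *
              ((d * f * b) * (e * c * a))))))) := by ring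
        rw [this, h0, h1, h2, g1, g2, g3]; ring
      have hprod : 0 < (d * f * b) * (e * c * a) := by
        rw [← key]
        exact mul_pos s1 (mul_pos s2 (mul_pos s3 (mul_pos s4 (mul_pos s5 s6))))
      rw [hTR, div_pos_iff, ← mul_pos_iff]
      exact hprod
end

section
/- Let n ≥ 1 and 1 ≤ m ≤ n. Let (L_i) be a sequence of continuous linear endomorphisms of the Euclidean space ℝⁿ converging (in operator norm) to an endomorphism L, and for each j ∈ {1,…,m} let (λ_i^j)_i be a sequence of real numbers converging to a real number λ^j. Set K_i := ker ∏_{j=1}^m (L_i − λ_i^j·id) and K := ker ∏_{j=1}^m (L − λ^j·id), where the product denotes composition of the maps. If dim K_i = m for every i and dim K = m, then the orthogonal projections of ℝⁿ onto K_i converge in operator norm to the orthogonal projection of ℝⁿ onto K. -/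
open Filter Topology

/-- The kernel of the (composition) product `∏_{j} (T - μⱼ · id)` of shifted endomorphisms of
Euclidean `ℝⁿ`. -/
noncomputable def polyKer {n : ℕ} (m : ℕ)
    (T : EuclideanSpace ℝ (Fin n) →L[ℝ] EuclideanSpace ℝ (Fin n)) (μ : Fin m → ℝ) :
    Submodule ℝ (EuclideanSpace ℝ (Fin n)) :=
  LinearMap.ker
    (((List.ofFn fun j : Fin m =>
      T - μ j • (1 : EuclideanSpace ℝ (Fin n) →L[ℝ] EuclideanSpace ℝ (Fin n))).prod :
      EuclideanSpace ℝ (Fin n) →ₗ[ℝ] EuclideanSpace ℝ (Fin n)))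

/-- The orthogonal projection onto a subspace `K` of Euclidean `ℝⁿ`, viewed as a continuous
linear endomorphism of `ℝⁿ`. -/
noncomputable def orthProj {n : ℕ} (K : Submodule ℝ (EuclideanSpace ℝ (Fin n))) :
    EuclideanSpace ℝ (Fin n) →L[ℝ] EuclideanSpace ℝ (Fin n) :=
  K.subtypeL.comp K.orthogonalProjection

/-! ### Auxiliary material -/

/-- The product operator whose kernel is `polyKer`. -/
noncomputable def polyProd {n : ℕ} (m : ℕ)
    (T : EuclideanSpace ℝ (Fin n) →L[ℝ] EuclideanSpace ℝ (Fin n)) (μ : Fin m → ℝ) :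
    EuclideanSpace ℝ (Fin n) →L[ℝ] EuclideanSpace ℝ (Fin n) :=
  (List.ofFn fun j : Fin m =>
    T - μ j • (1 : EuclideanSpace ℝ (Fin n) →L[ℝ] EuclideanSpace ℝ (Fin n))).prod

lemma polyKer_eq_ker_polyProd {n : ℕ} (m : ℕ)
    (T : EuclideanSpace ℝ (Fin n) →L[ℝ] EuclideanSpace ℝ (Fin n)) (μ : Fin m → ℝ) :
    polyKer m T μ = LinearMap.ker (polyProd m T μ : EuclideanSpace ℝ (Fin n) →ₗ[ℝ] EuclideanSpace ℝ (Fin n)) := rfl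

private lemma tendsto_listProd {M : Type*} [Monoid M] [TopologicalSpace M] [ContinuousMul M]
    {ι : Type*} (l : List ι) (f : ι → ℕ → M) (g : ι → M)
    (h : ∀ j, Tendsto (fun k => f j k) atTop (𝓝 (g j))) :
    Tendsto (fun k => (l.map (fun j => f j k)).prod) atTop (𝓝 ((l.map g).prod)) := by
  induction l with
  | nil => simpa using tendsto_const_nhds
  | cons a l ih => simpa using (h a).mul ih

lemma orthProj_apply {n : ℕ} (K : Submodule ℝ (EuclideanSpace ℝ (Fin n)))
    (x : EuclideanSpace ℝ (Fin n)) :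
    orthProj K x = (Submodule.orthogonalProjection K x : EuclideanSpace ℝ (Fin n)) := rfl

lemma orthProj_mem {n : ℕ} (K : Submodule ℝ (EuclideanSpace ℝ (Fin n)))
    (x : EuclideanSpace ℝ (Fin n)) : orthProj K x ∈ K :=
  (Submodule.orthogonalProjection K x).2

lemma orthProj_eq_self {n : ℕ} (K : Submodule ℝ (EuclideanSpace ℝ (Fin n)))
    {x : EuclideanSpace ℝ (Fin n)} (hx : x ∈ K) : orthProj K x = x := by
  rw [orthProj_apply]
  exact Submodule.starProjection_eq_self_iff.mpr hx

lemma orthProj_idem {n : ℕ} (K : Submodule ℝ (EuclideanSpace ℝ (Fin n))) :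
    orthProj K * orthProj K = orthProj K := by
  refine ContinuousLinearMap.ext fun x => ?_
  rw [ContinuousLinearMap.mul_apply]
  exact orthProj_eq_self K (orthProj_mem K x)

lemma orthProj_selfAdjoint {n : ℕ} (K : Submodule ℝ (EuclideanSpace ℝ (Fin n))) :
    IsSelfAdjoint (orthProj K) :=
  isSelfAdjoint_starProjection K

lemma orthProj_norm_le {n : ℕ} (K : Submodule ℝ (EuclideanSpace ℝ (Fin n))) :
    ‖orthProj K‖ ≤ 1 := by
  refine ContinuousLinearMap.opNorm_le_bound _ zero_le_one fun x => ?_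
  rw [one_mul, orthProj_apply]
  calc ‖(Submodule.orthogonalProjection K x : EuclideanSpace ℝ (Fin n))‖
      = ‖Submodule.orthogonalProjection K x‖ := rfl
    _ ≤ ‖Submodule.orthogonalProjection K‖ * ‖x‖ := (Submodule.orthogonalProjection K).le_opNorm x
    _ ≤ 1 * ‖x‖ := by gcongr; exact Submodule.orthogonalProjectionOnto_norm_le K
    _ = ‖x‖ := one_mul _

/-- The trace of `orthProj K` equals the dimension of `K`. -/
lemma trace_orthProj {n : ℕ} (K : Submodule ℝ (EuclideanSpace ℝ (Fin n))) :
    LinearMap.trace ℝ _ ((orthProj K : EuclideanSpace ℝ (Fin n) →ₗ[ℝ]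
      EuclideanSpace ℝ (Fin n))) = (Module.finrank ℝ K : ℝ) := by
  have hproj : LinearMap.IsProj K
      ((orthProj K : EuclideanSpace ℝ (Fin n) →ₗ[ℝ] EuclideanSpace ℝ (Fin n))) :=
    ⟨fun x => orthProj_mem K x, fun x hx => orthProj_eq_self K hx⟩
  exact hproj.trace

/-- Key lemma: if the orthogonal projections onto the kernels converge to some operator `P`
(along some sequence of data converging to the limit data), then `P` is the orthogonal
projection onto the limit kernel. -/
lemma key {n : ℕ} (m : ℕ)
    (L : ℕ → EuclideanSpace ℝ (Fin n) →L[ℝ] EuclideanSpace ℝ (Fin n))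
    (Llim : EuclideanSpace ℝ (Fin n) →L[ℝ] EuclideanSpace ℝ (Fin n))
    (hL : Tendsto L atTop (𝓝 Llim))
    (lam : ℕ → Fin m → ℝ) (lamlim : Fin m → ℝ)
    (hlam : ∀ j : Fin m, Tendsto (fun i => lam i j) atTop (𝓝 (lamlim j)))
    (hdim : ∀ i, Module.finrank ℝ (polyKer m (L i) (lam i)) = m)
    (hdimlim : Module.finrank ℝ (polyKer m Llim lamlim) = m)
    (P : EuclideanSpace ℝ (Fin n) →L[ℝ] EuclideanSpace ℝ (Fin n))
    (hP : Tendsto (fun k => orthProj (polyKer m (L k) (lam k))) atTop (𝓝 P)) :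
    P = orthProj (polyKer m Llim lamlim) := by
  classical
  set E := EuclideanSpace ℝ (Fin n)
  set K := polyKer m Llim lamlim with hK
  set Q : ℕ → E →L[ℝ] E := fun k => orthProj (polyKer m (L k) (lam k)) with hQ
  -- convergence of the product operators
  have hA : Tendsto (fun k => polyProd m (L k) (lam k)) atTop (𝓝 (polyProd m Llim lamlim)) := by
    simp only [polyProd, List.ofFn_eq_map]
    exact tendsto_listProd (List.finRange m)
      (fun j k => L k - lam k j • (1 : E →L[ℝ] E))
      (fun j => Llim - lamlim j • (1 : E →L[ℝ] E))
      (fun j => hL.sub ((hlam j).smul_const _))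
  -- each product annihilates the corresponding projection
  have hAQ : ∀ k, polyProd m (L k) (lam k) * Q k = 0 := by
    intro k
    refine ContinuousLinearMap.ext fun x => ?_
    have hx : Q k x ∈ LinearMap.ker (polyProd m (L k) (lam k) : E →ₗ[ℝ] E) :=
      orthProj_mem (polyKer m (L k) (lam k)) x
    rw [ContinuousLinearMap.mul_apply, ContinuousLinearMap.zero_apply]
    exact hx
  -- in the limit, the product annihilates `P`
  have h0 : polyProd m Llim lamlim * P = 0 := by
    have h1 : Tendsto (fun k => polyProd m (L k) (lam k) * Q k) atTop
        (𝓝 (polyProd m Llim lamlim * P)) := hA.mul hP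
    have h2 : Tendsto (fun k => polyProd m (L k) (lam k) * Q k) atTop
        (𝓝 (0 : E →L[ℝ] E)) := by
      simp only [hAQ]; exact tendsto_const_nhds
    exact tendsto_nhds_unique h1 h2
  -- range of P is contained in K
  have hrange : LinearMap.range (P : E →ₗ[ℝ] E) ≤ K := by
    rintro _ ⟨x, rfl⟩
    have := congrArg (fun T : E →L[ℝ] E => T x) h0
    simpa [hK, polyKer_eq_ker_polyProd, LinearMap.mem_ker] using this
  -- P is idempotent
  have hidem : P * P = P := by
    have h1 : Tendsto (fun k => Q k * Q k) atTop (𝓝 (P * P)) := hP.mul hP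
    have h2 : Tendsto (fun k => Q k * Q k) atTop (𝓝 P) := by
      have e : (fun k => Q k * Q k) = Q := funext fun k => orthProj_idem _
      rw [e]; exact hP
    exact tendsto_nhds_unique h1 h2
  -- P is self-adjoint
  have hsa : ContinuousLinearMap.adjoint P = P := by
    have hcont : Continuous (ContinuousLinearMap.adjoint : (E →L[ℝ] E) → (E →L[ℝ] E)) :=
      (ContinuousLinearMap.adjoint : (E →L[ℝ] E) ≃ₗᵢ⋆[ℝ] (E →L[ℝ] E)).continuous
    have h1 : Tendsto (fun k => ContinuousLinearMap.adjoint (Q k)) atTop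
        (𝓝 (ContinuousLinearMap.adjoint P)) := (hcont.tendsto P).comp hP
    have h2 : Tendsto (fun k => ContinuousLinearMap.adjoint (Q k)) atTop (𝓝 P) := by
      have : ∀ k, ContinuousLinearMap.adjoint (Q k) = Q k := fun k =>
        ContinuousLinearMap.isSelfAdjoint_iff'.mp (orthProj_selfAdjoint _)
      simp only [this]; exact hP
    exact tendsto_nhds_unique h1 h2
  -- trace of P equals m
  have htrP : LinearMap.trace ℝ E (P : E →ₗ[ℝ] E) = (m : ℝ) := by
    set tr : (E →L[ℝ] E) →ₗ[ℝ] ℝ :=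
      (LinearMap.trace ℝ E).comp (ContinuousLinearMap.coeLM ℝ) with htr
    have hcont : Continuous tr := tr.continuous_of_finiteDimensional
    have h1 : Tendsto (fun k => tr (Q k)) atTop (𝓝 (tr P)) := (hcont.tendsto P).comp hP
    have h2 : Tendsto (fun k => tr (Q k)) atTop (𝓝 ((m : ℝ))) := by
      have : ∀ k, tr (Q k) = (m : ℝ) := by
        intro k
        have := trace_orthProj (polyKer m (L k) (lam k))
        simpa [htr, hdim k] using this
      simp only [this]; exact tendsto_const_nhds
    simpa [htr] using tendsto_nhds_unique h1 h2
  -- rank of P equals m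
  have hproj : LinearMap.IsProj (LinearMap.range (P : E →ₗ[ℝ] E)) (P : E →ₗ[ℝ] E) := by
    refine ⟨fun x => LinearMap.mem_range_self _ x, ?_⟩
    rintro _ ⟨y, rfl⟩
    have := congrArg (fun T : E →L[ℝ] E => T y) hidem
    simpa using this
  have hrank : Module.finrank ℝ (LinearMap.range (P : E →ₗ[ℝ] E)) = m := by
    have := hproj.trace
    rw [htrP] at this
    exact_mod_cast this.symm
  -- the range of P is exactly K
  have hW : LinearMap.range (P : E →ₗ[ℝ] E) = K :=
    Submodule.eq_of_le_of_finrank_eq hrange (by rw [hrank, hK, hdimlim])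
  -- conclude
  refine ContinuousLinearMap.ext fun x => ?_
  have hmem : P x ∈ K := hW ▸ LinearMap.mem_range_self _ x
  have hinner : ∀ w ∈ K, inner ℝ (x - P x) w = (0 : ℝ) := by
    intro w hw
    rw [← hW] at hw
    obtain ⟨z, rfl⟩ := hw
    show inner ℝ (x - P x) (P z) = (0 : ℝ)
    have h1 : inner ℝ (x - P x) (P z) = (inner ℝ (ContinuousLinearMap.adjoint P (x - P x)) z : ℝ) := by
      rw [ContinuousLinearMap.adjoint_inner_left]
    rw [h1, hsa]
    have h2 : P (x - P x) = 0 := by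
      have := congrArg (fun T : E →L[ℝ] E => T x) hidem
      simp only [ContinuousLinearMap.mul_apply] at this
      rw [map_sub, this, sub_self]
    rw [h2, inner_zero_left]
  have := Submodule.eq_starProjection_of_mem_of_inner_eq_zero (K := K) hmem hinner
  rw [orthProj_apply]
  exact this.symm

theorem stmt4 (n m : ℕ) (hn : 1 ≤ n) (hm : 1 ≤ m) (hmn : m ≤ n)
    (L : ℕ → EuclideanSpace ℝ (Fin n) →L[ℝ] EuclideanSpace ℝ (Fin n))
    (Llim : EuclideanSpace ℝ (Fin n) →L[ℝ] EuclideanSpace ℝ (Fin n))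
    (hL : Tendsto L atTop (𝓝 Llim))
    (lam : ℕ → Fin m → ℝ) (lamlim : Fin m → ℝ)
    (hlam : ∀ j : Fin m, Tendsto (fun i => lam i j) atTop (𝓝 (lamlim j)))
    (hdim : ∀ i, Module.finrank ℝ (polyKer m (L i) (lam i)) = m)
    (hdimlim : Module.finrank ℝ (polyKer m Llim lamlim) = m) :
    Tendsto (fun i => orthProj (polyKer m (L i) (lam i))) atTop
      (𝓝 (orthProj (polyKer m Llim lamlim))) := by
  set E := EuclideanSpace ℝ (Fin n)
  haveI : ProperSpace (E →L[ℝ] E) := FiniteDimensional.proper ℝ _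
  refine tendsto_of_subseq_tendsto fun ns hns => ?_
  -- the projections live in the closed unit ball, which is compact
  have hball : ∀ i, orthProj (polyKer m (L (ns i)) (lam (ns i))) ∈
      Metric.closedBall (0 : E →L[ℝ] E) 1 := by
    intro i
    rw [Metric.mem_closedBall, dist_zero_right]
    exact orthProj_norm_le _
  obtain ⟨P, -, φ, hφmono, hφlim⟩ :=
    (isCompact_closedBall (0 : E →L[ℝ] E) 1).tendsto_subseq hball
  refine ⟨φ, ?_⟩
  have hσ : Tendsto (fun k => ns (φ k)) atTop atTop := hns.comp hφmono.tendsto_atTop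
  have hPK : P = orthProj (polyKer m Llim lamlim) :=
    key m (fun k => L (ns (φ k))) Llim (hL.comp hσ)
      (fun k => lam (ns (φ k))) lamlim
      (fun j => (hlam j).comp hσ)
      (fun k => hdim (ns (φ k))) hdimlim P hφlim
  rw [← hPK]
  exact hφlim
end

section
/- Let f : ℝ → ℝ be given by f(s) = (eˢ − 1)/(eˢ + 1), let 𝕊 := ℝ/2πℤ (the additive circle of circumference 2π, with its cosine and sine functions), and let E₁ := {(x,y,z,w) ∈ ℝ⁴ : (x,y) ≠ (0,0)}. Then the map F₁ : ℝ × 𝕊 × (0,∞) × (0,∞) → ℝ⁴ defined by F₁(a₁, θ, a₃, a₄) = ( a₃a₄·cos((π/2)·f(a₁))·cos θ, a₃a₄·cos((π/2)·f(a₁))·sin θ, a₃a₄·sin((π/2)·f(a₁)), a₃² − a₄² ) is a homeomorphism onto E₁; that is, F₁ is a continuous bijection from ℝ × 𝕊 × (0,∞) × (0,∞) onto E₁ whose inverse is continuous. -/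
open Real

/-- The function `f(s) = (eˢ - 1)/(eˢ + 1)`. -/
noncomputable def fBulge (s : ℝ) : ℝ := (Real.exp s - 1) / (Real.exp s + 1)

/-- `E₁ = {(x,y,z,w) ∈ ℝ⁴ : (x,y) ≠ (0,0)}`. -/
def E₁ : Set (ℝ × ℝ × ℝ × ℝ) := {p | (p.1, p.2.1) ≠ (0, 0)}

/-- The map `F₁(a₁, θ, a₃, a₄)` of Lemma 4.2. Here `𝕊 = ℝ/2πℤ` is `Real.Angle`. -/
noncomputable def F₁ : ℝ × Real.Angle × Set.Ioi (0 : ℝ) × Set.Ioi (0 : ℝ) → ℝ × ℝ × ℝ × ℝ :=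
  fun x =>
    ((x.2.2.1 : ℝ) * (x.2.2.2 : ℝ) * Real.cos ((π / 2) * fBulge x.1) * x.2.1.cos,
     (x.2.2.1 : ℝ) * (x.2.2.2 : ℝ) * Real.cos ((π / 2) * fBulge x.1) * x.2.1.sin,
     (x.2.2.1 : ℝ) * (x.2.2.2 : ℝ) * Real.sin ((π / 2) * fBulge x.1),
     (x.2.2.1 : ℝ) ^ 2 - (x.2.2.2 : ℝ) ^ 2)

lemma fBulge_mem_Ioo (s : ℝ) : fBulge s ∈ Set.Ioo (-1 : ℝ) 1 := by
  have h : (0:ℝ) < Real.exp s + 1 := by positivity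
  have he := Real.exp_pos s
  unfold fBulge
  constructor
  · rw [lt_div_iff₀ h]; nlinarith
  · rw [div_lt_one h]; nlinarith

lemma log_ratio_fBulge (s : ℝ) : Real.log ((1 + fBulge s) / (1 - fBulge s)) = s := by
  have h : (0:ℝ) < Real.exp s + 1 := by positivity
  have hden : (1:ℝ) - (Real.exp s - 1)/(Real.exp s + 1) = 2/(Real.exp s + 1) := by
    field_simp
    norm_num
  have key : (1 + fBulge s) / (1 - fBulge s) = Real.exp s := by
    unfold fBulge
    rw [div_eq_iff (by rw [hden]; positivity)]
    field_simp
    ring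
  rw [key, Real.log_exp]

lemma fBulge_log (t : ℝ) (h1 : -1 < t) (h2 : t < 1) :
    fBulge (Real.log ((1 + t) / (1 - t))) = t := by
  have h1' : (0:ℝ) < 1 + t := by linarith
  have h2' : (0:ℝ) < 1 - t := by linarith
  have hu : (0:ℝ) < (1 + t) / (1 - t) := by positivity
  unfold fBulge
  rw [Real.exp_log hu]
  have hden : (1 + t) / (1 - t) + 1 = 2 / (1 - t) := by field_simp; norm_num
  rw [div_eq_iff (by rw [hden]; positivity)]
  field_simp
  ring

lemma cos_phi_pos (a : ℝ) : 0 < Real.cos ((π / 2) * fBulge a) := by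
  obtain ⟨h1, h2⟩ := fBulge_mem_Ioo a
  have hπ := Real.pi_pos
  exact Real.cos_pos_of_mem_Ioo ⟨by nlinarith, by nlinarith⟩

lemma F₁_mem (x : ℝ × Real.Angle × Set.Ioi (0 : ℝ) × Set.Ioi (0 : ℝ)) : F₁ x ∈ E₁ := by
  obtain ⟨a₁, θ, ⟨a₃, h₃⟩, ⟨a₄, h₄⟩⟩ := x
  have h₃' : (0:ℝ) < a₃ := h₃
  have h₄' : (0:ℝ) < a₄ := h₄
  have hR : 0 < a₃ * a₄ * Real.cos ((π / 2) * fBulge a₁) :=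
    mul_pos (mul_pos h₃' h₄') (cos_phi_pos a₁)
  have hsc := θ.cos_sq_add_sin_sq
  simp only [F₁, E₁, Set.mem_setOf_eq, ne_eq, Prod.mk.injEq, not_and]
  intro hc hs
  have hc' : θ.cos = 0 := by
    rcases mul_eq_zero.mp hc with h | h
    · exact absurd h hR.ne'
    · exact h
  have hs' : θ.sin = 0 := by
    rcases mul_eq_zero.mp hs with h | h
    · exact absurd h hR.ne'
    · exact h
  rw [hc', hs'] at hsc
  norm_num at hsc

noncomputable def Ginv (p : ℝ × ℝ × ℝ × ℝ) : ℝ × Real.Angle × ℝ × ℝ :=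
  (Real.log ((1 + (2 / π) * Real.arctan (p.2.2.1 / Real.sqrt (p.1 ^ 2 + p.2.1 ^ 2))) /
             (1 - (2 / π) * Real.arctan (p.2.2.1 / Real.sqrt (p.1 ^ 2 + p.2.1 ^ 2)))),
   ((Complex.arg (p.1 + p.2.1 * Complex.I) : ℝ) : Real.Angle),
   Real.sqrt ((Real.sqrt (p.2.2.2 ^ 2 + 4 * (p.1 ^ 2 + p.2.1 ^ 2 + p.2.2.1 ^ 2)) + p.2.2.2) / 2),
   Real.sqrt ((Real.sqrt (p.2.2.2 ^ 2 + 4 * (p.1 ^ 2 + p.2.1 ^ 2 + p.2.2.1 ^ 2)) - p.2.2.2) / 2))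

lemma sq_add_sq_pos_of_mem {p : ℝ × ℝ × ℝ × ℝ} (hp : p ∈ E₁) : 0 < p.1 ^ 2 + p.2.1 ^ 2 := by
  have h : p.1 ≠ 0 ∨ p.2.1 ≠ 0 := by
    by_contra h
    push_neg at h
    exact hp (by rw [h.1, h.2])
  rcases h with h | h <;> positivity

lemma abs_lt_s_of_mem {p : ℝ × ℝ × ℝ × ℝ} (hp : p ∈ E₁) :
    |p.2.2.2| < Real.sqrt (p.2.2.2 ^ 2 + 4 * (p.1 ^ 2 + p.2.1 ^ 2 + p.2.2.1 ^ 2)) := by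
  have h := sq_add_sq_pos_of_mem hp
  calc |p.2.2.2| = Real.sqrt (p.2.2.2 ^ 2) := (Real.sqrt_sq_eq_abs _).symm
    _ < _ := Real.sqrt_lt_sqrt (sq_nonneg _) (by nlinarith [sq_nonneg p.2.2.1])

lemma Ginv3_pos {p : ℝ × ℝ × ℝ × ℝ} (hp : p ∈ E₁) : (Ginv p).2.2.1 ∈ Set.Ioi (0:ℝ) := by
  have h := abs_lt_s_of_mem hp
  have h' := abs_lt.mp h
  simp only [Ginv, Set.mem_Ioi]
  apply Real.sqrt_pos.mpr
  linarith [h'.1]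

lemma Ginv4_pos {p : ℝ × ℝ × ℝ × ℝ} (hp : p ∈ E₁) : (Ginv p).2.2.2 ∈ Set.Ioi (0:ℝ) := by
  have h := abs_lt.mp (abs_lt_s_of_mem hp)
  simp only [Ginv, Set.mem_Ioi]
  apply Real.sqrt_pos.mpr
  linarith [h.2]

lemma left_inv_aux (a₁ : ℝ) (θ : Real.Angle) (a₃ a₄ : ℝ) (h₃ : a₃ ∈ Set.Ioi (0:ℝ))
    (h₄ : a₄ ∈ Set.Ioi (0:ℝ)) :
    Ginv (F₁ (a₁, θ, ⟨a₃, h₃⟩, ⟨a₄, h₄⟩)) = (a₁, θ, a₃, a₄) := by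
  have h₃' : (0:ℝ) < a₃ := h₃
  have h₄' : (0:ℝ) < a₄ := h₄
  obtain ⟨hf1, hf2⟩ := fBulge_mem_Ioo a₁
  have hπ := Real.pi_pos
  set φ := (π / 2) * fBulge a₁ with hφdef
  have hφ1 : -(π / 2) < φ := by rw [hφdef]; nlinarith
  have hφ2 : φ < π / 2 := by rw [hφdef]; nlinarith
  have hcos : 0 < Real.cos φ := Real.cos_pos_of_mem_Ioo ⟨hφ1, hφ2⟩
  have hsc : Real.sin φ ^ 2 + Real.cos φ ^ 2 = 1 := Real.sin_sq_add_cos_sq φ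
  have hθ := θ.cos_sq_add_sin_sq
  have hR : 0 < a₃ * a₄ * Real.cos φ := mul_pos (mul_pos h₃' h₄') hcos
  simp only [F₁, Ginv]
  have hXY : (a₃ * a₄ * Real.cos ((π / 2) * fBulge a₁) * θ.cos) ^ 2 +
      (a₃ * a₄ * Real.cos ((π / 2) * fBulge a₁) * θ.sin) ^ 2 = (a₃ * a₄ * Real.cos φ) ^ 2 := by
    rw [← hφdef]
    linear_combination (a₃ * a₄ * Real.cos φ) ^ 2 * hθ
  have hρ : Real.sqrt ((a₃ * a₄ * Real.cos ((π / 2) * fBulge a₁) * θ.cos) ^ 2 +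
      (a₃ * a₄ * Real.cos ((π / 2) * fBulge a₁) * θ.sin) ^ 2) = a₃ * a₄ * Real.cos φ := by
    rw [hXY, Real.sqrt_sq hR.le]
  have harctan : Real.arctan (a₃ * a₄ * Real.sin ((π / 2) * fBulge a₁) /
      (a₃ * a₄ * Real.cos φ)) = φ := by
    rw [← hφdef]
    have : a₃ * a₄ * Real.sin φ / (a₃ * a₄ * Real.cos φ) = Real.tan φ := by
      rw [Real.tan_eq_sin_div_cos]
      field_simp
    rw [this, Real.arctan_tan hφ1 hφ2]
  have hQ : (a₃ * a₄ * Real.cos ((π / 2) * fBulge a₁) * θ.cos) ^ 2 +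
      (a₃ * a₄ * Real.cos ((π / 2) * fBulge a₁) * θ.sin) ^ 2 +
      (a₃ * a₄ * Real.sin ((π / 2) * fBulge a₁)) ^ 2 = (a₃ * a₄) ^ 2 := by
    rw [← hφdef]
    linear_combination (a₃ * a₄ * Real.cos φ) ^ 2 * hθ + (a₃ * a₄) ^ 2 * hsc
  have hs : Real.sqrt ((a₃ ^ 2 - a₄ ^ 2) ^ 2 + 4 * ((a₃ * a₄ * Real.cos ((π / 2) * fBulge a₁) * θ.cos) ^ 2 +
      (a₃ * a₄ * Real.cos ((π / 2) * fBulge a₁) * θ.sin) ^ 2 +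
      (a₃ * a₄ * Real.sin ((π / 2) * fBulge a₁)) ^ 2)) = a₃ ^ 2 + a₄ ^ 2 := by
    rw [hQ]
    have : (a₃ ^ 2 - a₄ ^ 2) ^ 2 + 4 * (a₃ * a₄) ^ 2 = (a₃ ^ 2 + a₄ ^ 2) ^ 2 := by ring
    rw [this, Real.sqrt_sq (by positivity)]
  refine Prod.ext ?_ (Prod.ext ?_ (Prod.ext ?_ ?_))
  · -- first component
    show Real.log _ = a₁
    rw [hρ, harctan]
    have ht : 2 / π * φ = fBulge a₁ := by
      rw [hφdef]; field_simp
    rw [ht, log_ratio_fBulge]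
  · -- angle component
    show ((Complex.arg _ : ℝ) : Real.Angle) = θ
    have hz : ((a₃ * a₄ * Real.cos ((π / 2) * fBulge a₁) * θ.cos : ℝ) : ℂ) +
        (a₃ * a₄ * Real.cos ((π / 2) * fBulge a₁) * θ.sin : ℝ) * Complex.I =
        ((a₃ * a₄ * Real.cos φ : ℝ) : ℂ) * (↑θ.cos + ↑θ.sin * Complex.I) := by
      rw [← hφdef]; push_cast; ring
    rw [hz, Complex.arg_real_mul _ hR]
    exact Complex.arg_cos_add_sin_mul_I_coe_angle θ
  · show Real.sqrt _ = a₃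
    rw [hs]
    have : (a₃ ^ 2 + a₄ ^ 2 + (a₃ ^ 2 - a₄ ^ 2)) / 2 = a₃ ^ 2 := by ring
    rw [this, Real.sqrt_sq h₃'.le]
  · show Real.sqrt _ = a₄
    rw [hs]
    have : (a₃ ^ 2 + a₄ ^ 2 - (a₃ ^ 2 - a₄ ^ 2)) / 2 = a₄ ^ 2 := by ring
    rw [this, Real.sqrt_sq h₄'.le]

lemma right_inv_aux (p : ℝ × ℝ × ℝ × ℝ) (hp : p ∈ E₁)
    (h3 : (Ginv p).2.2.1 ∈ Set.Ioi (0:ℝ)) (h4 : (Ginv p).2.2.2 ∈ Set.Ioi (0:ℝ)) :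
    F₁ ((Ginv p).1, (Ginv p).2.1, ⟨(Ginv p).2.2.1, h3⟩, ⟨(Ginv p).2.2.2, h4⟩) = p := by
  obtain ⟨x, y, z, w⟩ := p
  have hxy : 0 < x ^ 2 + y ^ 2 := sq_add_sq_pos_of_mem hp
  have hπ := Real.pi_pos
  set ρ := Real.sqrt (x ^ 2 + y ^ 2) with hρdef
  have hρ : 0 < ρ := Real.sqrt_pos.mpr hxy
  have hρ2 : ρ ^ 2 = x ^ 2 + y ^ 2 := Real.sq_sqrt hxy.le
  set φ := Real.arctan (z / ρ) with hφdef
  obtain ⟨hφ1, hφ2⟩ := Real.arctan_mem_Ioo (z / ρ)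
  set t := 2 / π * φ with htdef
  have ht1 : -1 < t := by
    rw [htdef, show 2 / π * φ = 2 * φ / π by ring, lt_div_iff₀ hπ]; linarith
  have ht2 : t < 1 := by
    rw [htdef, show 2 / π * φ = 2 * φ / π by ring, div_lt_one hπ]; linarith
  have hfB : fBulge (Real.log ((1 + t) / (1 - t))) = t := fBulge_log t ht1 ht2
  have hφ' : π / 2 * t = φ := by rw [htdef]; field_simp
  set Q := x ^ 2 + y ^ 2 + z ^ 2 with hQdef
  have hQpos : 0 < Q := by nlinarith [sq_nonneg z]
  have hsqQ : Real.sqrt Q ^ 2 = Q := Real.sq_sqrt hQpos.le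
  have hsqQpos : 0 < Real.sqrt Q := Real.sqrt_pos.mpr hQpos
  set s := Real.sqrt (w ^ 2 + 4 * Q) with hsdef
  have hs2 : s ^ 2 = w ^ 2 + 4 * Q := Real.sq_sqrt (by positivity)
  have hsw : |w| < s := abs_lt_s_of_mem hp
  obtain ⟨hsw1, hsw2⟩ := abs_lt.mp hsw
  -- cos and sin of φ
  have hsqrt_aux : Real.sqrt (1 + (z / ρ) ^ 2) = Real.sqrt Q / ρ := by
    have h1 : 1 + (z / ρ) ^ 2 = Q / ρ ^ 2 := by
      rw [hQdef, ← hρ2]; field_simp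
    rw [h1, Real.sqrt_div' _ (by positivity), Real.sqrt_sq hρ.le]
  have hcosφ : Real.cos φ = ρ / Real.sqrt Q := by
    rw [hφdef, Real.cos_arctan, hsqrt_aux, one_div_div]
  have hsinφ : Real.sin φ = z / Real.sqrt Q := by
    rw [hφdef, Real.sin_arctan, hsqrt_aux]
    field_simp
  -- a₃ a₄
  have ha3 : (Ginv (x, y, z, w)).2.2.1 = Real.sqrt ((s + w) / 2) := rfl
  have ha4 : (Ginv (x, y, z, w)).2.2.2 = Real.sqrt ((s - w) / 2) := rfl
  have hprod : Real.sqrt ((s + w) / 2) * Real.sqrt ((s - w) / 2) = Real.sqrt Q := by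
    rw [← Real.sqrt_mul (by linarith) _]
    congr 1
    linear_combination (hs2) / 4
  -- assemble
  simp only [F₁, Ginv]
  have hφeq : π / 2 * fBulge (Real.log
      ((1 + 2 / π * Real.arctan (z / Real.sqrt (x ^ 2 + y ^ 2))) /
       (1 - 2 / π * Real.arctan (z / Real.sqrt (x ^ 2 + y ^ 2))))) = φ := by
    rw [← hρdef, ← hφdef, ← htdef, hfB, hφ']
  rw [hφeq]
  have habs : ‖(↑x + ↑y * Complex.I : ℂ)‖ = ρ := by
    rw [Complex.norm_def, Complex.normSq_add_mul_I, hρdef]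
  have hRρ : Real.sqrt ((s + w) / 2) * Real.sqrt ((s - w) / 2) * Real.cos φ = ρ := by
    rw [hprod, hcosφ]
    field_simp
  refine Prod.ext ?_ (Prod.ext ?_ (Prod.ext ?_ ?_))
  · show Real.sqrt ((s + w) / 2) * Real.sqrt ((s - w) / 2) * Real.cos φ *
      Real.Angle.cos ((Complex.arg (↑x + ↑y * Complex.I) : ℝ) : Real.Angle) = x
    rw [Real.Angle.cos_coe, hRρ, ← habs, Complex.norm_mul_cos_arg]
    simp
  · show Real.sqrt ((s + w) / 2) * Real.sqrt ((s - w) / 2) * Real.cos φ *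
      Real.Angle.sin ((Complex.arg (↑x + ↑y * Complex.I) : ℝ) : Real.Angle) = y
    rw [Real.Angle.sin_coe, hRρ, ← habs, Complex.norm_mul_sin_arg]
    simp
  · show Real.sqrt ((s + w) / 2) * Real.sqrt ((s - w) / 2) * Real.sin φ = z
    rw [hprod, hsinφ]
    field_simp
  · show Real.sqrt ((s + w) / 2) ^ 2 - Real.sqrt ((s - w) / 2) ^ 2 = w
    rw [Real.sq_sqrt (by linarith), Real.sq_sqrt (by linarith)]
    ring

noncomputable def eqvF : (ℝ × Real.Angle × Set.Ioi (0 : ℝ) × Set.Ioi (0 : ℝ)) ≃ E₁ where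
  toFun x := ⟨F₁ x, F₁_mem x⟩
  invFun p := ((Ginv p.1).1, (Ginv p.1).2.1, ⟨(Ginv p.1).2.2.1, Ginv3_pos p.2⟩,
               ⟨(Ginv p.1).2.2.2, Ginv4_pos p.2⟩)
  left_inv := by
    rintro ⟨a₁, θ, ⟨a₃, h₃⟩, ⟨a₄, h₄⟩⟩
    have h := left_inv_aux a₁ θ a₃ a₄ h₃ h₄
    have h1 : (Ginv (F₁ (a₁, θ, ⟨a₃, h₃⟩, ⟨a₄, h₄⟩))).1 = a₁ := by rw [h]
    have h2 : (Ginv (F₁ (a₁, θ, ⟨a₃, h₃⟩, ⟨a₄, h₄⟩))).2.1 = θ := by rw [h]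
    have h3 : (Ginv (F₁ (a₁, θ, ⟨a₃, h₃⟩, ⟨a₄, h₄⟩))).2.2.1 = a₃ := by rw [h]
    have h4 : (Ginv (F₁ (a₁, θ, ⟨a₃, h₃⟩, ⟨a₄, h₄⟩))).2.2.2 = a₄ := by rw [h]
    exact Prod.ext h1 (Prod.ext h2
      (Prod.ext (Subtype.ext h3) (Subtype.ext h4)))
  right_inv := by
    rintro ⟨p, hp⟩
    exact Subtype.ext (right_inv_aux p hp (Ginv3_pos hp) (Ginv4_pos hp))

lemma continuous_F₁ : Continuous F₁ := by
  have hfb : Continuous fBulge := by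
    unfold fBulge
    exact (Real.continuous_exp.sub continuous_const).div
      (Real.continuous_exp.add continuous_const) (fun x => by positivity)
  have h1 : Continuous fun x : ℝ × Real.Angle × Set.Ioi (0:ℝ) × Set.Ioi (0:ℝ) => (x.2.2.1 : ℝ) :=
    continuous_subtype_val.comp (continuous_fst.comp (continuous_snd.comp continuous_snd))
  have h2 : Continuous fun x : ℝ × Real.Angle × Set.Ioi (0:ℝ) × Set.Ioi (0:ℝ) => (x.2.2.2 : ℝ) :=
    continuous_subtype_val.comp (continuous_snd.comp (continuous_snd.comp continuous_snd))
  have hφc : Continuous fun x : ℝ × Real.Angle × Set.Ioi (0:ℝ) × Set.Ioi (0:ℝ) =>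
      Real.cos ((π / 2) * fBulge x.1) :=
    Real.continuous_cos.comp (continuous_const.mul (hfb.comp continuous_fst))
  have hφs : Continuous fun x : ℝ × Real.Angle × Set.Ioi (0:ℝ) × Set.Ioi (0:ℝ) =>
      Real.sin ((π / 2) * fBulge x.1) :=
    Real.continuous_sin.comp (continuous_const.mul (hfb.comp continuous_fst))
  have hθc : Continuous fun x : ℝ × Real.Angle × Set.Ioi (0:ℝ) × Set.Ioi (0:ℝ) =>
      Real.Angle.cos x.2.1 :=
    Real.Angle.continuous_cos.comp (continuous_fst.comp continuous_snd)
  have hθs : Continuous fun x : ℝ × Real.Angle × Set.Ioi (0:ℝ) × Set.Ioi (0:ℝ) =>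
      Real.Angle.sin x.2.1 :=
    Real.Angle.continuous_sin.comp (continuous_fst.comp continuous_snd)
  unfold F₁
  exact (((h1.mul h2).mul hφc).mul hθc).prodMk
    ((((h1.mul h2).mul hφc).mul hθs).prodMk
      (((h1.mul h2).mul hφs).prodMk ((h1.pow 2).sub (h2.pow 2))))

lemma continuous_eqvF_inv : Continuous fun p : E₁ => ((Ginv p.1).1, (Ginv p.1).2.1,
    (⟨(Ginv p.1).2.2.1, Ginv3_pos p.2⟩ : Set.Ioi (0:ℝ)),
    (⟨(Ginv p.1).2.2.2, Ginv4_pos p.2⟩ : Set.Ioi (0:ℝ))) := by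
  have hx : Continuous fun p : E₁ => (p : ℝ × ℝ × ℝ × ℝ).1 :=
    continuous_fst.comp continuous_subtype_val
  have hy : Continuous fun p : E₁ => (p : ℝ × ℝ × ℝ × ℝ).2.1 :=
    (continuous_fst.comp continuous_snd).comp continuous_subtype_val
  have hz : Continuous fun p : E₁ => (p : ℝ × ℝ × ℝ × ℝ).2.2.1 :=
    (continuous_fst.comp (continuous_snd.comp continuous_snd)).comp continuous_subtype_val
  have hw : Continuous fun p : E₁ => (p : ℝ × ℝ × ℝ × ℝ).2.2.2 :=
    (continuous_snd.comp (continuous_snd.comp continuous_snd)).comp continuous_subtype_val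
  have hρ : Continuous fun p : E₁ =>
      Real.sqrt ((p : ℝ × ℝ × ℝ × ℝ).1 ^ 2 + (p : ℝ × ℝ × ℝ × ℝ).2.1 ^ 2) :=
    Real.continuous_sqrt.comp ((hx.pow 2).add (hy.pow 2))
  have hscont : Continuous fun p : E₁ => Real.sqrt ((p : ℝ × ℝ × ℝ × ℝ).2.2.2 ^ 2 +
      4 * ((p : ℝ × ℝ × ℝ × ℝ).1 ^ 2 + (p : ℝ × ℝ × ℝ × ℝ).2.1 ^ 2 +
        (p : ℝ × ℝ × ℝ × ℝ).2.2.1 ^ 2)) :=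
    Real.continuous_sqrt.comp ((hw.pow 2).add
      (continuous_const.mul (((hx.pow 2).add (hy.pow 2)).add (hz.pow 2))))
  have hc3 : Continuous fun p : E₁ =>
      (⟨(Ginv p.1).2.2.1, Ginv3_pos p.2⟩ : Set.Ioi (0:ℝ)) :=
    Continuous.subtype_mk (Real.continuous_sqrt.comp ((hscont.add hw).div_const 2)) _
  have hc4 : Continuous fun p : E₁ =>
      (⟨(Ginv p.1).2.2.2, Ginv4_pos p.2⟩ : Set.Ioi (0:ℝ)) :=
    Continuous.subtype_mk (Real.continuous_sqrt.comp ((hscont.sub hw).div_const 2)) _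
  rw [continuous_iff_continuousAt]
  rintro ⟨⟨x, y, z, w⟩, hp⟩
  have hπ := Real.pi_pos
  have hxy : 0 < x ^ 2 + y ^ 2 := sq_add_sq_pos_of_mem hp
  have hρpos : 0 < Real.sqrt (x ^ 2 + y ^ 2) := Real.sqrt_pos.mpr hxy
  -- continuity of t
  have ht : ContinuousAt (fun p : E₁ => 2 / π * Real.arctan ((p : ℝ × ℝ × ℝ × ℝ).2.2.1 /
      Real.sqrt ((p : ℝ × ℝ × ℝ × ℝ).1 ^ 2 + (p : ℝ × ℝ × ℝ × ℝ).2.1 ^ 2)))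
      ⟨(x, y, z, w), hp⟩ :=
    continuousAt_const.mul (Real.continuous_arctan.continuousAt.comp
      (hz.continuousAt.div hρ.continuousAt hρpos.ne'))
  -- bounds on t at the point
  set t₀ := 2 / π * Real.arctan (z / Real.sqrt (x ^ 2 + y ^ 2)) with ht₀
  obtain ⟨hb1, hb2⟩ := Real.arctan_mem_Ioo (z / Real.sqrt (x ^ 2 + y ^ 2))
  have ht1 : -1 < t₀ := by
    rw [ht₀, show 2 / π * Real.arctan (z / Real.sqrt (x ^ 2 + y ^ 2)) =
      2 * Real.arctan (z / Real.sqrt (x ^ 2 + y ^ 2)) / π by ring, lt_div_iff₀ hπ]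
    linarith
  have ht2 : t₀ < 1 := by
    rw [ht₀, show 2 / π * Real.arctan (z / Real.sqrt (x ^ 2 + y ^ 2)) =
      2 * Real.arctan (z / Real.sqrt (x ^ 2 + y ^ 2)) / π by ring, div_lt_one hπ]
    linarith
  have hden : (1:ℝ) - t₀ ≠ 0 := by linarith
  have hratio : (1 + t₀) / (1 - t₀) ≠ 0 := by
    apply ne_of_gt
    apply div_pos <;> linarith
  have hdiv : ContinuousAt (fun p : E₁ =>
      (1 + 2 / π * Real.arctan ((p : ℝ × ℝ × ℝ × ℝ).2.2.1 /
        Real.sqrt ((p : ℝ × ℝ × ℝ × ℝ).1 ^ 2 + (p : ℝ × ℝ × ℝ × ℝ).2.1 ^ 2))) /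
      (1 - 2 / π * Real.arctan ((p : ℝ × ℝ × ℝ × ℝ).2.2.1 /
        Real.sqrt ((p : ℝ × ℝ × ℝ × ℝ).1 ^ 2 + (p : ℝ × ℝ × ℝ × ℝ).2.1 ^ 2))))
      ⟨(x, y, z, w), hp⟩ :=
    (continuousAt_const.add ht).div (continuousAt_const.sub ht) hden
  have hc1 := ContinuousAt.comp (x := (⟨(x, y, z, w), hp⟩ : E₁))
    (f := fun p : E₁ =>
      (1 + 2 / π * Real.arctan ((p : ℝ × ℝ × ℝ × ℝ).2.2.1 /
        Real.sqrt ((p : ℝ × ℝ × ℝ × ℝ).1 ^ 2 + (p : ℝ × ℝ × ℝ × ℝ).2.1 ^ 2))) /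
      (1 - 2 / π * Real.arctan ((p : ℝ × ℝ × ℝ × ℝ).2.2.1 /
        Real.sqrt ((p : ℝ × ℝ × ℝ × ℝ).1 ^ 2 + (p : ℝ × ℝ × ℝ × ℝ).2.1 ^ 2))))
    (Real.continuousAt_log hratio) hdiv
  -- angle component
  have hcplx : Continuous fun p : E₁ =>
      ((p : ℝ × ℝ × ℝ × ℝ).1 : ℂ) + ((p : ℝ × ℝ × ℝ × ℝ).2.1 : ℂ) * Complex.I :=
    (Complex.continuous_ofReal.comp hx).add
      ((Complex.continuous_ofReal.comp hy).mul continuous_const)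
  have hzne : ((x : ℂ) + (y : ℂ) * Complex.I) ≠ 0 := by
    have hp' : (x, y) ≠ ((0:ℝ), (0:ℝ)) := hp
    intro h
    have h1 : x = 0 := by simpa using congrArg Complex.re h
    have h2 : y = 0 := by simpa using congrArg Complex.im h
    exact hp' (by rw [h1, h2])
  have hc2 := ContinuousAt.comp (x := (⟨(x, y, z, w), hp⟩ : E₁))
    (f := fun p : E₁ => ((p : ℝ × ℝ × ℝ × ℝ).1 : ℂ) + ((p : ℝ × ℝ × ℝ × ℝ).2.1 : ℂ) * Complex.I)
    (Complex.continuousAt_arg_coe_angle hzne) hcplx.continuousAt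
  exact hc1.prodMk (hc2.prodMk (hc3.continuousAt.prodMk hc4.continuousAt))

noncomputable def homeoF : (ℝ × Real.Angle × Set.Ioi (0 : ℝ) × Set.Ioi (0 : ℝ)) ≃ₜ E₁ :=
  { eqvF with
    continuous_toFun := continuous_F₁.subtype_mk _
    continuous_invFun := continuous_eqvF_inv }

/-- `F₁` is a homeomorphism from `ℝ × 𝕊 × (0,∞) × (0,∞)` onto `E₁`. -/
theorem stmt5 :
    ∃ e : (ℝ × Real.Angle × Set.Ioi (0 : ℝ) × Set.Ioi (0 : ℝ)) ≃ₜ E₁,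
      ∀ x, (e x : ℝ × ℝ × ℝ × ℝ) = F₁ x := by
  exact ⟨homeoF, fun x => rfl⟩
end

section
/- Let Ω be a nonempty, bounded, open, convex subset of the Euclidean plane ℝ². Then there exists a metric space structure on Ω whose distance function d satisfies: for all x, y ∈ Ω and all points a, b in the frontier of Ω such that x lies in the open segment from a to y and y lies in the open segment from x to b, one has d(x, y) = (1/2)·log( (dist(a,y)·dist(b,x)) / (dist(a,x)·dist(b,y)) ), where dist denotes the Euclidean distance. -/
open scoped RealInnerProductSpace

noncomputable section Stmt9Aux

local notation "E2" => EuclideanSpace ℝ (Fin 2)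

/-- Log-ratio values of affine functionals positive on `Ω`. -/
def Gset (Ω : Set E2) (x y : E2) : Set ℝ :=
  {r | ∃ (f : E2 →L[ℝ] ℝ) (c : ℝ), (∀ z ∈ Ω, 0 < f z + c) ∧
    r = Real.log (f x + c) - Real.log (f y + c)}

/-- Funk-type asymmetric distance. -/
def Fk (Ω : Set E2) (x y : E2) : ℝ := sSup (Gset Ω x y)

lemma zero_mem_Gset (Ω : Set E2) (x y : E2) : (0:ℝ) ∈ Gset Ω x y :=
  ⟨0, 1, fun z _ => by norm_num, by norm_num⟩

lemma Gset_nonempty (Ω : Set E2) (x y : E2) : (Gset Ω x y).Nonempty :=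
  ⟨0, zero_mem_Gset Ω x y⟩

lemma affine_comb {f : E2 →L[ℝ] ℝ} {c u v : ℝ} {x b y : E2}
    (huv : u + v = 1) (hy : u • x + v • b = y) :
    f y + c = u * (f x + c) + v * (f b + c) := by
  have hfy : u * f x + v * f b = f y := by
    rw [← hy]; simp [map_add, map_smul]
  calc f y + c = u * f x + v * f b + (u + v) * c := by rw [hfy, huv]; ring
    _ = u * (f x + c) + v * (f b + c) := by ring

lemma bddAbove_Gset {Ω : Set E2} (hop : IsOpen Ω) {x y : E2}
    (hx : x ∈ Ω) (hy : y ∈ Ω) :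
    BddAbove (Gset Ω x y) := by
  by_cases hxy : x = y
  · subst hxy
    refine ⟨0, fun r hr => ?_⟩
    obtain ⟨f, c, hpos, rfl⟩ := hr
    simp
  · obtain ⟨ε, hε, hball⟩ := Metric.isOpen_iff.mp hop y hy
    have hnx : 0 < ‖y - x‖ := by
      rw [norm_pos_iff, sub_ne_zero]; exact fun h => hxy h.symm
    set s : ℝ := ε / (2 * ‖y - x‖) with hs
    have hs0 : 0 < s := by positivity
    have hkey : s * ‖y - x‖ = ε / 2 := by
      rw [hs]; field_simp
    have hzmem : y + s • (y - x) ∈ Ω := by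
      apply hball
      rw [Metric.mem_ball, dist_eq_norm]
      have h1 : y + s • (y - x) - y = s • (y - x) := by abel
      rw [h1, norm_smul, Real.norm_eq_abs, abs_of_pos hs0]
      linarith
    refine ⟨Real.log (1 + s) - Real.log s, fun r hr => ?_⟩
    obtain ⟨f, c, hpos, rfl⟩ := hr
    set z : E2 := y + s • (y - x) with hzdef
    have hcomb : f z = (1 + s) * f y - s * f x := by
      rw [hzdef]; simp [map_add, map_smul, map_sub]; ring
    have hxpos : 0 < f x + c := hpos x hx
    have hypos : 0 < f y + c := hpos y hy
    have hzpos : 0 < f z + c := hpos z hzmem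
    have h1 : s * (f x + c) ≤ (1 + s) * (f y + c) := by nlinarith
    have h2 := Real.log_le_log (by positivity) h1
    rw [Real.log_mul (ne_of_gt hs0) (ne_of_gt hxpos),
      Real.log_mul (by positivity) (ne_of_gt hypos)] at h2
    linarith

lemma Fk_nonneg {Ω : Set E2} (hop : IsOpen Ω) {x y : E2}
    (hx : x ∈ Ω) (hy : y ∈ Ω) : 0 ≤ Fk Ω x y :=
  le_csSup (bddAbove_Gset hop hx hy) (zero_mem_Gset Ω x y)

lemma Fk_self {Ω : Set E2} (x : E2) : Fk Ω x x = 0 := by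
  refine le_antisymm (csSup_le (Gset_nonempty Ω x x) ?_)
    (le_csSup ⟨0, fun r hr => ?_⟩ (zero_mem_Gset Ω x x))
  · rintro r ⟨f, c, hpos, rfl⟩; simp
  · obtain ⟨f, c, hpos, rfl⟩ := hr; simp

lemma Fk_triangle {Ω : Set E2} (hop : IsOpen Ω) {x y z : E2}
    (hx : x ∈ Ω) (hy : y ∈ Ω) (hz : z ∈ Ω) :
    Fk Ω x z ≤ Fk Ω x y + Fk Ω y z := by
  refine csSup_le (Gset_nonempty Ω x z) ?_
  rintro r ⟨f, c, hpos, rfl⟩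
  have h1 : Real.log (f x + c) - Real.log (f y + c) ≤ Fk Ω x y :=
    le_csSup (bddAbove_Gset hop hx hy) ⟨f, c, hpos, rfl⟩
  have h2 : Real.log (f y + c) - Real.log (f z + c) ≤ Fk Ω y z :=
    le_csSup (bddAbove_Gset hop hy hz) ⟨f, c, hpos, rfl⟩
  linarith

lemma Fk_pos {Ω : Set E2} (hbd : Bornology.IsBounded Ω) (hop : IsOpen Ω)
    {x y : E2} (hx : x ∈ Ω) (hy : y ∈ Ω) (hxy : x ≠ y) :
    0 < Fk Ω x y := by
  obtain ⟨R, hR⟩ := isBounded_iff_forall_norm_le.mp hbd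
  set w : E2 := x - y with hw
  set f : E2 →L[ℝ] ℝ := innerSL ℝ w with hf
  set c : ℝ := ‖w‖ * |R| + 1 with hc
  have hpos : ∀ z ∈ Ω, 0 < f z + c := by
    intro z hz
    have h1 : |(inner ℝ w z : ℝ)| ≤ ‖w‖ * ‖z‖ := by
      simpa [Real.norm_eq_abs] using norm_inner_le_norm (𝕜 := ℝ) w z
    have h2 : ‖z‖ ≤ |R| := (hR z hz).trans (le_abs_self R)
    have h3 : ‖w‖ * ‖z‖ ≤ ‖w‖ * |R| := by
      apply mul_le_mul_of_nonneg_left h2 (norm_nonneg w)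
    have hfz : f z = (inner ℝ w z : ℝ) := innerSL_apply_apply ℝ w z
    rw [hfz, hc]
    have := abs_le.mp (h1.trans h3)
    linarith [this.1]
  have hdiff : f x - f y = ‖w‖ ^ 2 := by
    have : f x - f y = (inner ℝ w (x - y) : ℝ) := by
      rw [hf]; simp [innerSL_apply_apply, inner_sub_right]
    rw [this, ← hw, real_inner_self_eq_norm_sq]
  have hwpos : 0 < ‖w‖ := by
    rw [norm_pos_iff, hw, sub_ne_zero]; exact hxy
  have hypos : 0 < f y + c := hpos y hy
  have hlt : f y + c < f x + c := by nlinarith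
  have hval : 0 < Real.log (f x + c) - Real.log (f y + c) := by
    have := Real.log_lt_log hypos hlt
    linarith
  calc (0:ℝ) < Real.log (f x + c) - Real.log (f y + c) := hval
    _ ≤ Fk Ω x y := le_csSup (bddAbove_Gset hop hx hy) ⟨f, c, hpos, rfl⟩

/-- The key computation: the Funk distance equals the boundary log-ratio. -/
lemma Fk_eq {Ω : Set E2} (hop : IsOpen Ω) (hconv : Convex ℝ Ω)
    {x y b : E2} (hx : x ∈ Ω) (hy : y ∈ Ω) (hb : b ∈ frontier Ω)
    (hseg : y ∈ openSegment ℝ x b) :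
    Fk Ω x y = Real.log (dist b x) - Real.log (dist b y) := by
  obtain ⟨u, v, hu, hv, huv, hyeq⟩ := hseg
  have hbnotin : b ∉ Ω := by
    rw [hop.frontier_eq] at hb; exact hb.2
  have hbcl : b ∈ closure Ω := frontier_subset_closure hb
  have hbx : x ≠ b := fun h => hbnotin (h ▸ hx)
  have hdbx : 0 < dist b x := dist_pos.mpr fun h => hbx (h.symm)
  have hby : b - y = u • (b - x) := by
    have hv' : v = 1 - u := by linarith
    rw [← hyeq, hv']
    module
  have hdist : dist b y = u * dist b x := by
    rw [dist_eq_norm, dist_eq_norm, hby, norm_smul, Real.norm_eq_abs,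
      abs_of_pos hu]
  have hrhs : Real.log (dist b x) - Real.log (dist b y) = -Real.log u := by
    rw [hdist, Real.log_mul (ne_of_gt hu) (ne_of_gt hdbx)]; ring
  rw [hrhs]
  refine le_antisymm (csSup_le (Gset_nonempty Ω x y) ?_) ?_
  · rintro r ⟨f, c, hpos, rfl⟩
    have hxpos : 0 < f x + c := hpos x hx
    have hbnn : 0 ≤ f b + c := by
      have hcl : closure Ω ⊆ {z : E2 | 0 ≤ f z + c} :=
        closure_minimal (fun z hz => (hpos z hz).le)
          (isClosed_le continuous_const (f.continuous.add continuous_const))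
      exact hcl hbcl
    have hcomb : f y + c = u * (f x + c) + v * (f b + c) := affine_comb huv hyeq
    have h1 : u * (f x + c) ≤ f y + c := by nlinarith
    have h2 := Real.log_le_log (by positivity) h1
    rw [Real.log_mul (ne_of_gt hu) (ne_of_gt hxpos)] at h2
    linarith
  · obtain ⟨f0, hf0⟩ := geometric_hahn_banach_open_point hconv hop hbnotin
    set f : E2 →L[ℝ] ℝ := -f0 with hf
    set c : ℝ := f0 b with hc
    have hpos : ∀ z ∈ Ω, 0 < f z + c := by
      intro z hz
      have := hf0 z hz
      simp only [hf, hc, ContinuousLinearMap.neg_apply]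
      linarith
    have hxpos : 0 < f x + c := hpos x hx
    have hfb : f b + c = 0 := by simp [hf, hc]
    have hcomb : f y + c = u * (f x + c) + v * (f b + c) := affine_comb huv hyeq
    have hyval : f y + c = u * (f x + c) := by rw [hcomb, hfb]; ring
    have hval : Real.log (f x + c) - Real.log (f y + c) = -Real.log u := by
      rw [hyval, Real.log_mul (ne_of_gt hu) (ne_of_gt hxpos)]; ring
    rw [← hval]
    exact le_csSup (bddAbove_Gset hop hx hy) ⟨f, c, hpos, rfl⟩

end Stmt9Aux

theorem stmt9 (Ω : Set (EuclideanSpace ℝ (Fin 2))) (hne : Ω.Nonempty)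
    (hbd : Bornology.IsBounded Ω) (hop : IsOpen Ω) (hconv : Convex ℝ Ω) :
    ∃ m : MetricSpace ↥Ω,
      ∀ (x y : ↥Ω) (a b : EuclideanSpace ℝ (Fin 2)),
        a ∈ frontier Ω → b ∈ frontier Ω →
        (x : EuclideanSpace ℝ (Fin 2)) ∈ openSegment ℝ a (y : EuclideanSpace ℝ (Fin 2)) →
        (y : EuclideanSpace ℝ (Fin 2)) ∈ openSegment ℝ (x : EuclideanSpace ℝ (Fin 2)) b →
        @dist ↥Ω m.toPseudoMetricSpace.toDist x y =
          (1 / 2) * Real.log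
            ((dist a (y : EuclideanSpace ℝ (Fin 2)) * dist b (x : EuclideanSpace ℝ (Fin 2))) /
             (dist a (x : EuclideanSpace ℝ (Fin 2)) * dist b (y : EuclideanSpace ℝ (Fin 2)))) := by
  classical
  refine ⟨{
    dist := fun x y => (Fk Ω x.1 y.1 + Fk Ω y.1 x.1) / 2
    dist_self := fun x => by simp [Fk_self]
    dist_comm := fun x y => by ring
    dist_triangle := fun x y z => by
      show (Fk Ω x.1 z.1 + Fk Ω z.1 x.1) / 2 ≤
        (Fk Ω x.1 y.1 + Fk Ω y.1 x.1) / 2 + (Fk Ω y.1 z.1 + Fk Ω z.1 y.1) / 2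
      have h1 := Fk_triangle hop x.2 y.2 z.2
      have h2 := Fk_triangle hop z.2 y.2 x.2
      linarith
    eq_of_dist_eq_zero := by
      intro x y h
      by_contra hne'
      have hxy : x.1 ≠ y.1 := fun h' => hne' (Subtype.ext h')
      have h1 := Fk_pos hbd hop x.2 y.2 hxy
      have h2 := Fk_nonneg hop y.2 x.2
      have h' : (Fk Ω x.1 y.1 + Fk Ω y.1 x.1) / 2 = 0 := h
      have h'' : Fk Ω x.1 y.1 + Fk Ω y.1 x.1 = 0 := by linear_combination 2 * h'
      clear h h'
      linarith }, ?_⟩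
  intro x y a b ha hb hxa hyb
  have hFxy : Fk Ω x.1 y.1 = Real.log (dist b x.1) - Real.log (dist b y.1) :=
    Fk_eq hop hconv x.2 y.2 hb hyb
  have hFyx : Fk Ω y.1 x.1 = Real.log (dist a y.1) - Real.log (dist a x.1) := by
    refine Fk_eq hop hconv y.2 x.2 ha ?_
    rwa [openSegment_symm] at hxa
  have hanotin : a ∉ Ω := by rw [hop.frontier_eq] at ha; exact ha.2
  have hbnotin : b ∉ Ω := by rw [hop.frontier_eq] at hb; exact hb.2
  have hax : 0 < dist a x.1 := dist_pos.mpr fun h => hanotin (h ▸ x.2)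
  have hay : 0 < dist a y.1 := dist_pos.mpr fun h => hanotin (h ▸ y.2)
  have hbx : 0 < dist b x.1 := dist_pos.mpr fun h => hbnotin (h ▸ x.2)
  have hby : 0 < dist b y.1 := dist_pos.mpr fun h => hbnotin (h ▸ y.2)
  show (Fk Ω x.1 y.1 + Fk Ω y.1 x.1) / 2 = _
  rw [hFxy, hFyx,
    Real.log_div (by positivity) (by positivity),
    Real.log_mul (ne_of_gt hay) (ne_of_gt hbx),
    Real.log_mul (ne_of_gt hax) (ne_of_gt hby)]
  ring
end

section
/- Let Ω be a nonempty, bounded, open, convex subset of the Euclidean plane ℝ², and let d be any metric on Ω satisfying: for all x, y ∈ Ω and all a, b in the frontier of Ω with x in the open segment from a to y and y in the open segment from x to b, d(x,y) = (1/2)·log( (dist(a,y)·dist(b,x)) / (dist(a,x)·dist(b,y)) ). Then for all x, y, z ∈ Ω with y lying in the open segment from x to z, one has d(x, z) = d(x, y) + d(y, z). -/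
private abbrev Epl : Type := EuclideanSpace ℝ (Fin 2)

private lemma seg_mem {E : Type*} [NormedAddCommGroup E] [NormedSpace ℝ E]
    (x v : E) {t₁ t t₂ : ℝ} (h1 : t₁ < t) (h2 : t < t₂) :
    x + t • v ∈ openSegment ℝ (x + t₁ • v) (x + t₂ • v) := by
  have hne : t₂ - t₁ ≠ 0 := by linarith
  refine ⟨(t₂ - t) / (t₂ - t₁), (t - t₁) / (t₂ - t₁),
    div_pos (by linarith) (by linarith), div_pos (by linarith) (by linarith), ?_, ?_⟩
  · rw [← add_div, div_eq_one_iff_eq hne]; ring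
  · match_scalars <;> field_simp <;> ring

private lemma dp {E : Type*} [NormedAddCommGroup E] [NormedSpace ℝ E]
    (x v : E) (t₁ t₂ : ℝ) : dist (x + t₁ • v) (x + t₂ • v) = |t₁ - t₂| * ‖v‖ := by
  rw [dist_eq_norm]
  have : (x + t₁ • v) - (x + t₂ • v) = (t₁ - t₂) • v := by module
  rw [this, norm_smul, Real.norm_eq_abs]

private lemma dp0 {E : Type*} [NormedAddCommGroup E] [NormedSpace ℝ E]
    (x v : E) (t : ℝ) : dist (x + t • v) x = |t| * ‖v‖ := by
  have := dp x v t 0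
  simpa using this

private lemma frontier_ray {E : Type*} [NormedAddCommGroup E] [NormedSpace ℝ E]
    (Ω : Set E) (hbd : Bornology.IsBounded Ω) (hop : IsOpen Ω)
    {x v : E} (hx : x ∈ Ω) (hv : v ≠ 0) :
    ∃ T : ℝ, 0 < T ∧ x + T • v ∈ frontier Ω ∧ ∀ t : ℝ, x + t • v ∈ Ω → t < T := by
  have hvn : 0 < ‖v‖ := norm_pos_iff.mpr hv
  set S : Set ℝ := {t | x + t • v ∈ Ω} with hS
  have hS0 : (0 : ℝ) ∈ S := by simp [hS, hx]
  obtain ⟨R, hR⟩ := isBounded_iff_forall_norm_le.mp hbd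
  have hbdd : BddAbove S := by
    refine ⟨(R + ‖x‖) / ‖v‖, fun t ht => ?_⟩
    have h1 : ‖x + t • v‖ ≤ R := hR _ ht
    have h2 : ‖t • v‖ ≤ R + ‖x‖ := by
      calc ‖t • v‖ = ‖(x + t • v) - x‖ := by rw [add_sub_cancel_left]
        _ ≤ ‖x + t • v‖ + ‖x‖ := norm_sub_le _ _
        _ ≤ R + ‖x‖ := by linarith
    rw [norm_smul, Real.norm_eq_abs] at h2
    rw [le_div_iff₀ hvn]
    have := le_abs_self t
    nlinarith
  set T := sSup S with hT
  have hlub : IsLUB S T := isLUB_csSup ⟨0, hS0⟩ hbdd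
  have hTnot : T ∉ S := by
    intro hTS
    have hcont : Continuous (fun t : ℝ => x + t • v) := by continuity
    have hSopen : IsOpen S := hop.preimage hcont
    obtain ⟨ε, hε, hball⟩ := Metric.isOpen_iff.mp hSopen T hTS
    have hmem : T + ε / 2 ∈ S := by
      apply hball
      simp only [Metric.mem_ball, Real.dist_eq]
      rw [add_sub_cancel_left, abs_of_pos (by linarith)]
      linarith
    have := hlub.1 hmem
    linarith
  have hTmem : x + T • v ∈ frontier Ω := by
    rw [hop.frontier_eq]
    refine ⟨?_, hTnot⟩
    have hTcl : T ∈ closure S := hlub.mem_closure ⟨0, hS0⟩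
    have hcont : Continuous (fun t : ℝ => x + t • v) := by continuity
    exact map_mem_closure (f := fun t : ℝ => x + t • v) hcont hTcl (fun t ht => ht)
  have hlt : ∀ t, x + t • v ∈ Ω → t < T := fun t ht =>
    lt_of_le_of_ne (hlub.1 ht) (fun h => hTnot (h ▸ ht))
  exact ⟨T, hlt 0 (by simpa using hx), hTmem, hlt⟩

private lemma calc_aux (A s T nv : ℝ) (hA : A < 0) (h0s : 0 < s) (hs1 : s < 1)
    (h1T : 1 < T) (hnv : 0 < nv) :
    1 / 2 * Real.log ((|A - 1| * nv * (|T| * nv)) / (|A| * nv * (|T - 1| * nv))) =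
    1 / 2 * Real.log ((|A - s| * nv * (|T| * nv)) / (|A| * nv * (|T - s| * nv))) +
    1 / 2 * Real.log ((|A - 1| * nv * (|T - s| * nv)) / (|A - s| * nv * (|T - 1| * nv))) := by
  rw [abs_of_neg (show A - 1 < 0 by linarith), abs_of_pos (show (0:ℝ) < T by linarith),
      abs_of_neg hA, abs_of_pos (show (0:ℝ) < T - 1 by linarith),
      abs_of_neg (show A - s < 0 by linarith), abs_of_pos (show (0:ℝ) < T - s by linarith)]
  have hQ : 0 < (-(A - s) * nv * (T * nv)) / (-A * nv * ((T - s) * nv)) :=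
    div_pos (mul_pos (mul_pos (by linarith) hnv) (mul_pos (by linarith) hnv))
      (mul_pos (mul_pos (by linarith) hnv) (mul_pos (by linarith) hnv))
  have hRp : 0 < (-(A - 1) * nv * ((T - s) * nv)) / (-(A - s) * nv * ((T - 1) * nv)) :=
    div_pos (mul_pos (mul_pos (by linarith) hnv) (mul_pos (by linarith) hnv))
      (mul_pos (mul_pos (by linarith) hnv) (mul_pos (by linarith) hnv))
  have hP : (-(A - 1) * nv * (T * nv)) / (-A * nv * ((T - 1) * nv)) =
      ((-(A - s) * nv * (T * nv)) / (-A * nv * ((T - s) * nv))) *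
      ((-(A - 1) * nv * ((T - s) * nv)) / (-(A - s) * nv * ((T - 1) * nv))) := by
    rw [div_mul_div_comm]
    rw [div_eq_div_iff
      (ne_of_gt (mul_pos (mul_pos (show (0:ℝ) < -A by linarith) hnv)
        (mul_pos (show (0:ℝ) < T - 1 by linarith) hnv)))
      (ne_of_gt (mul_pos (mul_pos (mul_pos (show (0:ℝ) < -A by linarith) hnv)
        (mul_pos (show (0:ℝ) < T - s by linarith) hnv))
        (mul_pos (mul_pos (show (0:ℝ) < -(A - s) by linarith) hnv)
        (mul_pos (show (0:ℝ) < T - 1 by linarith) hnv))))]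
    ring
  rw [hP, Real.log_mul (ne_of_gt hQ) (ne_of_gt hRp)]
  ring

theorem stmt10 (Ω : Set (EuclideanSpace ℝ (Fin 2))) (hne : Ω.Nonempty)
    (hbd : Bornology.IsBounded Ω) (hop : IsOpen Ω) (hconv : Convex ℝ Ω)
    (m : MetricSpace ↥Ω)
    (hdist : ∀ (x y : ↥Ω) (a b : EuclideanSpace ℝ (Fin 2)),
      a ∈ frontier Ω → b ∈ frontier Ω →
      (x : EuclideanSpace ℝ (Fin 2)) ∈ openSegment ℝ a (y : EuclideanSpace ℝ (Fin 2)) →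
      (y : EuclideanSpace ℝ (Fin 2)) ∈ openSegment ℝ (x : EuclideanSpace ℝ (Fin 2)) b →
      @dist ↥Ω m.toPseudoMetricSpace.toDist x y =
        (1 / 2) * Real.log
          ((dist a (y : EuclideanSpace ℝ (Fin 2)) * dist b (x : EuclideanSpace ℝ (Fin 2))) /
           (dist a (x : EuclideanSpace ℝ (Fin 2)) * dist b (y : EuclideanSpace ℝ (Fin 2))))) :
    ∀ x y z : ↥Ω,
      (y : EuclideanSpace ℝ (Fin 2)) ∈
        openSegment ℝ (x : EuclideanSpace ℝ (Fin 2)) (z : EuclideanSpace ℝ (Fin 2)) →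
      @dist ↥Ω m.toPseudoMetricSpace.toDist x z =
        @dist ↥Ω m.toPseudoMetricSpace.toDist x y +
        @dist ↥Ω m.toPseudoMetricSpace.toDist y z := by
  intro x y z hy
  by_cases hxz : (x : EuclideanSpace ℝ (Fin 2)) = (z : EuclideanSpace ℝ (Fin 2))
  · have hxz' : x = z := Subtype.ext hxz
    rw [hxz'] at hy ⊢
    rw [openSegment_same] at hy
    have hyz : y = z := Subtype.ext hy
    rw [hyz]
    simp
  · set v : Epl := (z : Epl) - (x : Epl) with hv_def
    have hv : v ≠ 0 := sub_ne_zero.mpr (Ne.symm hxz)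
    obtain ⟨α, β, hα, hβ, hαβ, hsum⟩ := hy
    have hα1 : α = 1 - β := by linarith
    have hyv : (y : Epl) = (x : Epl) + β • v := by
      rw [← hsum, hα1, hv_def]; module
    have hβ1 : β < 1 := by linarith
    have hzv : (z : Epl) = (x : Epl) + (1 : ℝ) • v := by rw [hv_def]; module
    -- forward frontier point b
    obtain ⟨T, hT0, hbfr, hTlt⟩ := frontier_ray Ω hbd hop x.2 hv
    have hT1 : 1 < T := hTlt 1 (by rw [← hzv]; exact z.2)
    have hTβ : β < T := hTlt β (by rw [← hyv]; exact y.2)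
    -- backward frontier point a
    obtain ⟨T', hT'0, hafr, hT'lt⟩ := frontier_ray Ω hbd hop x.2 (neg_ne_zero.mpr hv)
    set A : ℝ := -T' with hA_def
    have haeq : (x : Epl) + T' • (-v) = (x : Epl) + A • v := by rw [hA_def]; module
    rw [haeq] at hafr
    have hAlt : ∀ t : ℝ, (x : Epl) + t • v ∈ Ω → A < t := by
      intro t ht
      have : (x : Epl) + (-t) • (-v) ∈ Ω := by
        have he : (x : Epl) + (-t) • (-v) = (x : Epl) + t • v := by module
        rw [he]; exact ht
      have := hT'lt (-t) this
      simp only [hA_def]; linarith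
    have hA0 : A < 0 := by
      have := hAlt 0 (by simpa using x.2); simpa using this
    have hAβ : A < β := hAlt β (by rw [← hyv]; exact y.2)
    set a : Epl := (x : Epl) + A • v with ha_def
    set b : Epl := (x : Epl) + T • v with hb_def
    have h00 : (x : Epl) + (0 : ℝ) • v = (x : Epl) := by module
    have m1 := seg_mem (x : Epl) v hA0 one_pos
    rw [h00, ← ha_def, ← hzv] at m1
    have m2 := seg_mem (x : Epl) v one_pos hT1
    rw [h00, ← hb_def, ← hzv] at m2
    have m3 := seg_mem (x : Epl) v hA0 hβ
    rw [h00, ← ha_def, ← hyv] at m3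
    have m4 := seg_mem (x : Epl) v hβ hTβ
    rw [h00, ← hb_def, ← hyv] at m4
    have m5 := seg_mem (x : Epl) v hAβ hβ1
    rw [← ha_def, ← hyv, ← hzv] at m5
    have m6 := seg_mem (x : Epl) v hβ1 hT1
    rw [← hb_def, ← hyv, ← hzv] at m6
    have e1 := hdist x z a b hafr hbfr m1 m2
    have e2 := hdist x y a b hafr hbfr m3 m4
    have e3 := hdist y z a b hafr hbfr m5 m6
    rw [e1, e2, e3]
    rw [hyv, hzv, ha_def, hb_def]
    rw [dp, dp, dp, dp, dp0, dp0]
    exact calc_aux A β T ‖v‖ hA0 hβ hβ1 hT1 (norm_pos_iff.mpr hv)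
end
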